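/- arXiv:2408.05632 — 3 statements merged into one kernel-verified Lean document; each statement's English description precedes it below -/
import Mathlib

section
/- A binary relation ≿ on l∞ satisfies axioms (A1)–(A5), Monotone Continuity (MC), Invariance with respect to the Scale of Utils (ISU), Invariance with respect to Individual Origins of Utilities (IOU), Strong Monotonicity, and Invariance with respect to Delaying Improving Sequences (IDIS) if and only if there exists a unique δ ∈ (0,1) such that the function I(x) = (1−δ)·Σ_{t=0}^∞ δ^t x_t is a constant equivalent representing ≿. -/
open scoped ENNReal BoundedContinuousFunction

noncomputable section

/-- `l∞`: the Banach space of bounded real sequences with the sup norm. -/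
abbrev Linf : Type := BoundedContinuousFunction ℕ ℝ

/-- `ba(ℕ)`: the norm dual of `l∞`, endowed with the weak* topology. -/
abbrev Ba : Type := WeakDual ℝ Linf

/-- The constant sequence `(θ, θ, ...)`. -/
def cst (θ : ℝ) : Linf := BoundedContinuousFunction.const ℕ θ

/-- Build an element of `l∞` from a bounded sequence. -/
def ofSeq (f : ℕ → ℝ) (C : ℝ) (h : ∀ n, |f n| ≤ C) : Linf :=
  BoundedContinuousFunction.ofNormedAddCommGroupDiscrete f C
    (by simpa [Real.norm_eq_abs] using h)

/-- The delayed sequence `(0, d₀, d₁, d₂, ...)`. -/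
def delaySeq (d : Linf) : Linf :=
  ofSeq (fun n => if n = 0 then 0 else d (n - 1)) ‖d‖ (by
    intro n
    by_cases h : n = 0
    · simp [h]
    · simpa [h, Real.norm_eq_abs] using d.norm_coe_le_norm (n - 1))

/-- The shifted sequence `(x₁, x₂, x₃, ...)`. -/
def shiftSeq (x : Linf) : Linf :=
  x.compContinuous ⟨fun n => n + 1, continuous_of_discreteTopology⟩

/-- The permuted sequence `x_σ = (x_{σ 0}, x_{σ 1}, ...)`. -/
def permSeq (σ : Equiv.Perm ℕ) (x : Linf) : Linf :=
  x.compContinuous ⟨fun n => σ n, continuous_of_discreteTopology⟩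

/-- The indicator sequence of a set `A ⊆ ℕ`. -/
def indic (A : Set ℕ) : Linf :=
  ofSeq (A.indicator fun _ => (1 : ℝ)) 1 (by
    intro n
    by_cases h : n ∈ A
    · simp [Set.indicator_of_mem h]
    · simp [Set.indicator_of_notMem h])

/-- `kEx`: the sequence equal to `k` on `E` and to `x` off `E`. -/
def patch (k : ℝ) (E : Set ℕ) (x : Linf) : Linf :=
  ofSeq (fun n => E.indicator (fun _ => k) n + Eᶜ.indicator (fun m => x m) n)
    (|k| + ‖x‖) (by
    intro n
    by_cases h : n ∈ E
    · simp only [Set.indicator_of_mem h, Set.indicator_of_notMem (by simpa using h :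
        n ∉ Eᶜ), add_zero]
      exact le_add_of_le_of_nonneg le_rfl (norm_nonneg x)
    · simp only [Set.indicator_of_notMem h, Set.indicator_of_mem (by simpa using h :
        n ∈ Eᶜ), zero_add]
      calc |x n| ≤ ‖x‖ := by simpa [Real.norm_eq_abs] using x.norm_coe_le_norm n
      _ ≤ |k| + ‖x‖ := le_add_of_nonneg_left (abs_nonneg k))

/-- The exponential discounted sum `(1-δ) ∑ δ^t x_t` (convention `0^0 = 1`). -/
def discSum (δ : ℝ) (x : Linf) : ℝ := (1 - δ) * ∑' t, δ ^ t * x t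

/-! ### Axioms -/

/-- The strict (asymmetric) part of a relation. -/
def SPref (R : Linf → Linf → Prop) (x y : Linf) : Prop := R x y ∧ ¬ R y x

/-- (A1) Weak order: complete and transitive. -/
def A1 (R : Linf → Linf → Prop) : Prop :=
  (∀ x y, R x y ∨ R y x) ∧ ∀ x y z, R x y → R y z → R x z

/-- (A2) Monotonicity. -/
def A2 (R : Linf → Linf → Prop) : Prop :=
  (∀ x y : Linf, (∀ n, y n ≤ x n) → R x y) ∧ SPref R (cst 1) (cst 0)

/-- (A3) Continuity. -/
def A3 (R : Linf → Linf → Prop) : Prop := ∀ x y z : Linf,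
  IsClosed {α : ℝ | α ∈ Set.Icc (0 : ℝ) 1 ∧ R (α • x + (1 - α) • z) y} ∧
  IsClosed {α : ℝ | α ∈ Set.Icc (0 : ℝ) 1 ∧ R y (α • x + (1 - α) • z)}

/-- (A4) Invariance with respect to a common reference point. -/
def A4 (R : Linf → Linf → Prop) : Prop :=
  ∀ x y : Linf, ∀ θ : ℝ, R x y → R (x + cst θ) (y + cst θ)

/-- (A5) Convexity. -/
def A5 (R : Linf → Linf → Prop) : Prop :=
  ∀ x y : Linf, ∀ θ lam : ℝ, lam ∈ Set.Icc (0 : ℝ) 1 →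
    R x (cst θ) → R y (cst θ) → R (lam • x + (1 - lam) • y) (cst θ)

/-- Axioms (A1)-(A5) together. -/
def A15 (R : Linf → Linf → Prop) : Prop := A1 R ∧ A2 R ∧ A3 R ∧ A4 R ∧ A5 R

/-- (MC) Monotone continuity. -/
def MC (R : Linf → Linf → Prop) : Prop :=
  ∀ (x : Linf) (θ : ℝ), SPref R x (cst θ) →
    ∀ E : ℕ → Set ℕ, (∀ n, E (n + 1) ⊆ E n) → (⋂ n, E n) = ∅ →
      ∀ k : ℝ, ∃ n₀ : ℕ, SPref R (patch k (E n₀) x) (cst θ)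

/-- (IDIS) Invariance with respect to delaying improving sequences. -/
def IDIS (R : Linf → Linf → Prop) : Prop :=
  ∀ x d : Linf, R (x + d) x → R (x + delaySeq d) x

/-- (ISU) Invariance with respect to the scale of utils. -/
def ISU (R : Linf → Linf → Prop) : Prop :=
  ∀ x y : Linf, ∀ α : ℝ, 0 ≤ α → R x y → R (α • x) (α • y)

/-- (IOU) Invariance with respect to individual origins of utilities. -/
def IOU (R : Linf → Linf → Prop) : Prop :=
  ∀ x y z : Linf, (R x y ∧ R y x) → (R (x + z) (y + z) ∧ R (y + z) (x + z))

/-- Strong monotonicity. -/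
def StrongMono (R : Linf → Linf → Prop) : Prop :=
  (∀ x y : Linf, (∀ n, y n ≤ x n) → R x y) ∧
  ∀ x y : Linf, (∀ n, y n ≤ x n) → x ≠ y → SPref R x y

/-- (ITIS) Invariance with respect to applying `T` to improving sequences. -/
def ITIS (T : Linf → Linf) (R : Linf → Linf → Prop) : Prop :=
  ∀ x d : Linf, R (x + d) x → R (x + T d) x

/-- Time invariance: `x ∼ (x₁, x₂, x₃, ...)`. -/
def TimeInv (R : Linf → Linf → Prop) : Prop :=
  ∀ x : Linf, R x (shiftSeq x) ∧ R (shiftSeq x) x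

/-- `I` is a constant equivalent for `≿`: `x ∼ I(x)` for every `x`. -/
def ConstEquiv (R : Linf → Linf → Prop) (I : Linf → ℝ) : Prop :=
  ∀ x, R x (cst (I x)) ∧ R (cst (I x)) x

/-- `I` represents `≿`: `x ≿ y ↔ I(x) ≥ I(y)`. -/
def Represents (R : Linf → Linf → Prop) (I : Linf → ℝ) : Prop :=
  ∀ x y, R x y ↔ I y ≤ I x

/-! ### Discount structures -/

/-- A functional `p ∈ ba(ℕ)` is positive. -/
def IsPos (p : Ba) : Prop := ∀ x : Linf, (∀ n, 0 ≤ x n) → 0 ≤ p x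

/-- `Δ`: the set of discount structures. -/
def Delta : Set Ba := {p | IsPos p ∧ p (cst 1) = 1}

/-- `Δ^σ`: countably additive discount structures. -/
def DeltaSigma : Set Ba :=
  {p ∈ Delta | ∃ f : ℕ → ℝ, (∀ n, 0 ≤ f n) ∧ Summable f ∧ (∑' n, f n) = 1 ∧
    ∀ x : Linf, p x = ∑' n, f n * x n}

/-- `ℬ`: the set of Banach–Mazur limits. -/
def BM : Set Ba := {p ∈ Delta | ∀ x : Linf, p (shiftSeq x) = p x}

/-- The exponential discounting functionals with parameter `δ ∈ [0,1)`. -/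
def Geom : Set Ba := {p | ∃ δ ∈ Set.Ico (0 : ℝ) 1, ∀ x : Linf, p x = discSum δ x}

/-- `Δ(T*)`: discount structures that are eigenvectors of the adjoint of `T`,
expressed via the duality `⟨T x, p⟩ = λ ⟨x, p⟩`. -/
def DeltaT (T : Linf → Linf) : Set Ba :=
  {p ∈ Delta | ∃ lam : ℝ, ∀ x : Linf, p (T x) = lam * p x}

/-- A map `T : l∞ → l∞` is positive. -/
def PosMap (T : Linf → Linf) : Prop :=
  ∀ x : Linf, (∀ n, 0 ≤ x n) → ∀ n, 0 ≤ T x n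

/-- `ca(ℕ)`: countably additive elements of `ba(ℕ)`. -/
def caSet : Set Ba :=
  {μ | ∀ A : ℕ → Set ℕ, (∀ n, A (n + 1) ⊆ A n) → (⋂ n, A n) = ∅ →
    Filter.Tendsto (fun n => μ (indic (A n))) Filter.atTop (nhds 0)}

/-- `pa(ℕ)`: purely finitely additive elements of `ba(ℕ)`. -/
def paSet : Set Ba := {μ | ∀ n : ℕ, μ (indic {n}) = 0}

/-- `c` is grounded on `D`. -/
def Grounded (D : Set Ba) (c : Ba → ℝ≥0∞) : Prop := (⨅ p ∈ D, c p) = 0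

/-- `c` is grounded on `[0,1]`. -/
def Grounded01 (c : ℝ → ℝ≥0∞) : Prop := (⨅ δ ∈ Set.Icc (0 : ℝ) 1, c δ) = 0

/-- Maxmin form: `I(x) = min_{p ∈ D} ⟨x,p⟩`, the minimum being attained. -/
def MinForm (D : Set Ba) (I : Linf → ℝ) : Prop :=
  ∀ x, (∃ p ∈ D, I x = p x) ∧ ∀ p ∈ D, I x ≤ p x

/-- Variational form: `I(x) = min_{p ∈ D} {⟨x,p⟩ + c(p)}`, the minimum being attained. -/
def VarMinForm (D : Set Ba) (c : Ba → ℝ≥0∞) (I : Linf → ℝ) : Prop :=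
  ∀ x, (∃ p ∈ D, (I x : EReal) = (p x : EReal) + (c p : EReal)) ∧
    ∀ p ∈ D, (I x : EReal) ≤ (p x : EReal) + (c p : EReal)

/-- Maxmin discounting form over a set of discount factors `E ⊆ [0,1)`. -/
def MinDelta (E : Set ℝ) (I : Linf → ℝ) : Prop :=
  ∀ x, (∃ δ ∈ E, I x = discSum δ x) ∧ ∀ δ ∈ E, I x ≤ discSum δ x

/-- Variational discounting form over discount factors. -/
def VarMinDelta (E : Set ℝ) (c : ℝ → ℝ≥0∞) (I : Linf → ℝ) : Prop :=
  ∀ x, (∃ δ ∈ E, (I x : EReal) = (discSum δ x : EReal) + (c δ : EReal)) ∧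
    ∀ δ ∈ E, (I x : EReal) ≤ (discSum δ x : EReal) + (c δ : EReal)

/-- Convexity for `ℝ≥0∞`-valued functions on a subset of `ba(ℕ)`. -/
def ConvexENN (D : Set Ba) (g : Ba → ℝ≥0∞) : Prop :=
  ∀ p ∈ D, ∀ q ∈ D, ∀ a b : ℝ, 0 ≤ a → 0 ≤ b → a + b = 1 →
    g (a • p + b • q) ≤ ENNReal.ofReal a * g p + ENNReal.ofReal b * g q



/-! ### discSum toolkit -/

namespace EDU

lemma linf_apply_le_norm (x : Linf) (n : ℕ) : |x n| ≤ ‖x‖ := by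
  simpa [Real.norm_eq_abs] using x.norm_coe_le_norm n

lemma summable_disc {δ : ℝ} (hδ0 : 0 ≤ δ) (hδ1 : δ < 1) (x : Linf) :
    Summable (fun t => δ ^ t * x t) := by
  apply Summable.of_norm
  apply Summable.of_nonneg_of_le (fun n => norm_nonneg _) (fun n => ?_)
    ((summable_geometric_of_lt_one hδ0 hδ1).mul_right ‖x‖)
  have h1 : |δ ^ n * x n| = δ ^ n * |x n| := by
    rw [abs_mul, abs_of_nonneg (pow_nonneg hδ0 n)]
  rw [Real.norm_eq_abs, h1]
  exact mul_le_mul_of_nonneg_left (linf_apply_le_norm x n) (pow_nonneg hδ0 n)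

variable {δ : ℝ}

lemma discSum_add (hδ0 : 0 ≤ δ) (hδ1 : δ < 1) (x y : Linf) :
    discSum δ (x + y) = discSum δ x + discSum δ y := by
  unfold discSum
  have : ∀ t : ℕ, δ ^ t * ((x + y) t) = δ ^ t * x t + δ ^ t * y t := by
    intro t; simp [mul_add]
  rw [tsum_congr this, Summable.tsum_add (summable_disc hδ0 hδ1 x) (summable_disc hδ0 hδ1 y)]
  ring

lemma discSum_smul (hδ0 : 0 ≤ δ) (hδ1 : δ < 1) (a : ℝ) (x : Linf) :
    discSum δ (a • x) = a * discSum δ x := by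
  unfold discSum
  have : ∀ t : ℕ, δ ^ t * ((a • x) t) = a * (δ ^ t * x t) := by
    intro t; simp; ring
  rw [tsum_congr this, tsum_mul_left]
  ring

lemma discSum_const (hδ0 : 0 ≤ δ) (hδ1 : δ < 1) (θ : ℝ) :
    discSum δ (cst θ) = θ := by
  unfold discSum
  have : ∀ t : ℕ, δ ^ t * ((cst θ) t) = δ ^ t * θ := by intro t; rfl
  rw [tsum_congr this, tsum_mul_right, tsum_geometric_of_lt_one hδ0 hδ1]
  have : (1:ℝ) - δ ≠ 0 := by linarith
  field_simp

lemma discSum_mono (hδ0 : 0 ≤ δ) (hδ1 : δ < 1) {x y : Linf}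
    (h : ∀ n, y n ≤ x n) : discSum δ y ≤ discSum δ x := by
  unfold discSum
  apply mul_le_mul_of_nonneg_left _ (by linarith)
  exact Summable.tsum_le_tsum (fun t => mul_le_mul_of_nonneg_left (h t) (pow_nonneg hδ0 t))
    (summable_disc hδ0 hδ1 y) (summable_disc hδ0 hδ1 x)

lemma discSum_strict (hδ0 : 0 < δ) (hδ1 : δ < 1) {x y : Linf}
    (h : ∀ n, y n ≤ x n) (hne : x ≠ y) : discSum δ y < discSum δ x := by
  obtain ⟨n, hn⟩ : ∃ n, y n < x n := by
    by_contra hc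
    push_neg at hc
    exact hne (BoundedContinuousFunction.ext fun n => le_antisymm (hc n) (h n))
  unfold discSum
  apply mul_lt_mul_of_pos_left _ (by linarith)
  exact Summable.tsum_lt_tsum (fun t => mul_le_mul_of_nonneg_left (h t) (pow_nonneg hδ0.le t))
    (mul_lt_mul_of_pos_left hn (pow_pos hδ0 n))
    (summable_disc hδ0.le hδ1 y) (summable_disc hδ0.le hδ1 x)

lemma discSum_delay (hδ0 : 0 ≤ δ) (hδ1 : δ < 1) (d : Linf) :
    discSum δ (delaySeq d) = δ * discSum δ d := by
  unfold discSum
  have hs := summable_disc hδ0 hδ1 (delaySeq d)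
  rw [Summable.tsum_eq_zero_add hs]
  have h0 : δ ^ 0 * (delaySeq d) 0 = 0 := by
    simp [delaySeq, ofSeq]
  have h1 : ∀ n : ℕ, δ ^ (n + 1) * (delaySeq d) (n + 1) = δ * (δ ^ n * d n) := by
    intro n
    have : (delaySeq d) (n + 1) = d n := by simp [delaySeq, ofSeq]
    rw [this, pow_succ]; ring
  rw [h0, tsum_congr h1, tsum_mul_left]
  ring


open Classical in
lemma patch_apply (k : ℝ) (E : Set ℕ) (x : Linf) (n : ℕ) :
    patch k E x n = if n ∈ E then k else x n := by
  by_cases h : n ∈ E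
  · simp [patch, ofSeq, Set.indicator_of_mem h,
      Set.indicator_of_notMem (by simpa using h : n ∉ Eᶜ), h]
  · simp [patch, ofSeq, Set.indicator_of_notMem h,
      Set.indicator_of_mem (by simpa using h : n ∈ Eᶜ), h]

set_option maxHeartbeats 1000000 in
open Classical in
lemma discSum_patch_bound (hδ0 : 0 ≤ δ) (hδ1 : δ < 1) (k : ℝ) (x : Linf)
    {E : Set ℕ} {N : ℕ} (hE : E ⊆ Set.Ici N) :
    |discSum δ (patch k E x) - discSum δ x| ≤ (|k| + ‖x‖) * δ ^ N := by
  set M : ℝ := |k| + ‖x‖ with hM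
  have hM0 : 0 ≤ M := add_nonneg (abs_nonneg k) (norm_nonneg x)
  set g : ℕ → ℝ := fun t => if N ≤ t then M * δ ^ t else 0 with hg
  have hgsum : Summable g := by
    apply Summable.of_nonneg_of_le (fun t => ?_) (fun t => ?_)
      ((summable_geometric_of_lt_one hδ0 hδ1).mul_left M)
    · by_cases h : N ≤ t <;> simp [hg, h, mul_nonneg hM0 (pow_nonneg hδ0 t)]
    · by_cases h : N ≤ t <;> simp [hg, h, mul_nonneg hM0 (pow_nonneg hδ0 t)]
  have hgs : ∑' t, g t = M * δ ^ N * (1 - δ)⁻¹ := by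
    rw [← Summable.sum_add_tsum_nat_add N hgsum]
    have h1 : ∀ i ∈ Finset.range N, g i = 0 := by
      intro i hi
      simp [hg, Nat.not_le.mpr (Finset.mem_range.mp hi)]
    rw [Finset.sum_eq_zero h1, zero_add]
    have h2 : ∀ i : ℕ, g (i + N) = (M * δ ^ N) * δ ^ i := by
      intro i
      simp only [hg, Nat.le_add_left, if_pos, pow_add]
      ring
    rw [tsum_congr h2, tsum_mul_left, tsum_geometric_of_lt_one hδ0 hδ1]
  have hdiff : discSum δ (patch k E x) - discSum δ x
      = (1 - δ) * ∑' t, (δ ^ t * (patch k E x) t - δ ^ t * x t) := by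
    unfold discSum
    rw [Summable.tsum_sub (summable_disc hδ0 hδ1 _) (summable_disc hδ0 hδ1 _)]
    ring
  have hsub : Summable (fun t => δ ^ t * (patch k E x) t - δ ^ t * x t) :=
    (summable_disc hδ0 hδ1 _).sub (summable_disc hδ0 hδ1 _)
  have habs : |∑' t, (δ ^ t * (patch k E x) t - δ ^ t * x t)| ≤ ∑' t, g t := by
    calc |∑' t, (δ ^ t * (patch k E x) t - δ ^ t * x t)|
        ≤ ∑' t, |δ ^ t * (patch k E x) t - δ ^ t * x t| := by
          have habs' : Summable (fun t => ‖δ ^ t * (patch k E x) t - δ ^ t * x t‖) := by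
            simpa [Real.norm_eq_abs] using hsub.abs
          simpa [Real.norm_eq_abs] using norm_tsum_le_tsum_norm habs'
      _ ≤ ∑' t, g t := by
          apply Summable.tsum_le_tsum _ hsub.abs hgsum
          intro t
          by_cases ht : t ∈ E
          · have hNt : N ≤ t := hE ht
            simp only [hg, if_pos hNt]
            rw [patch_apply, if_pos ht, ← mul_sub, abs_mul,
              abs_of_nonneg (pow_nonneg hδ0 t)]
            rw [mul_comm M (δ ^ t)]
            apply mul_le_mul_of_nonneg_left _ (pow_nonneg hδ0 t)
            calc |k - x t| ≤ |k| + |x t| := abs_sub k (x t)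
              _ ≤ M := by have := linf_apply_le_norm x t; rw [hM]; linarith
          · rw [patch_apply, if_neg ht, sub_self, abs_zero]
            by_cases h : N ≤ t <;>
              simp [hg, h, mul_nonneg hM0 (pow_nonneg hδ0 t)]
  rw [hdiff, abs_mul, abs_of_nonneg (by linarith : (0:ℝ) ≤ 1 - δ)]
  calc (1 - δ) * |∑' t, (δ ^ t * (patch k E x) t - δ ^ t * x t)|
      ≤ (1 - δ) * (M * δ ^ N * (1 - δ)⁻¹) := by
        rw [← hgs]; exact mul_le_mul_of_nonneg_left habs (by linarith)
    _ = M * δ ^ N := by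
        have : (1:ℝ) - δ ≠ 0 := by linarith
        field_simp

lemma exists_subset_Ici {E : ℕ → Set ℕ} (hdec : ∀ n, E (n + 1) ⊆ E n)
    (hempty : (⋂ n, E n) = ∅) (N : ℕ) : ∃ n, E n ⊆ Set.Ici N := by
  have hanti : ∀ m n, m ≤ n → E n ⊆ E m := by
    intro m n hmn
    induction hmn with
    | refl => exact fun _ h => h
    | step _ ih => exact fun a ha => ih (hdec _ ha)
  have hnotin : ∀ t : ℕ, ∃ n, t ∉ E n := by
    intro t
    by_contra hc
    push_neg at hc
    have : t ∈ ⋂ n, E n := Set.mem_iInter.mpr hc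
    rw [hempty] at this
    exact this
  choose nf hnf using hnotin
  refine ⟨(Finset.range N).sup nf, fun t ht => ?_⟩
  by_contra hlt
  rw [Set.mem_Ici, not_le] at hlt
  have hle : nf t ≤ (Finset.range N).sup nf :=
    Finset.le_sup (Finset.mem_range.mpr hlt)
  exact hnf t (hanti _ _ hle ht)


lemma discSum_combo (hδ0 : 0 ≤ δ) (hδ1 : δ < 1) (a : ℝ) (x z : Linf) :
    discSum δ (a • x + (1 - a) • z) = a * discSum δ x + (1 - a) * discSum δ z := by
  rw [discSum_add hδ0 hδ1, discSum_smul hδ0 hδ1, discSum_smul hδ0 hδ1]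

lemma backward {R : Linf → Linf → Prop} {δ : ℝ} (hδ : δ ∈ Set.Ioo (0:ℝ) 1)
    (hRep : Represents R (fun x => discSum δ x)) :
    A15 R ∧ MC R ∧ ISU R ∧ IOU R ∧ StrongMono R ∧ IDIS R := by
  obtain ⟨hδ0, hδ1⟩ := hδ
  have hR : ∀ x y, R x y ↔ discSum δ y ≤ discSum δ x := hRep
  have hmono : ∀ x y : Linf, (∀ n, y n ≤ x n) → R x y := by
    intro x y h
    exact (hR x y).mpr (discSum_mono hδ0.le hδ1 h)
  have hstrict : ∀ x y : Linf, (∀ n, y n ≤ x n) → x ≠ y → SPref R x y := by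
    intro x y h hne
    refine ⟨hmono x y h, ?_⟩
    rw [hR]
    exact not_le.mpr (discSum_strict hδ0 hδ1 h hne)
  refine ⟨⟨⟨?_, ?_⟩, ⟨hmono, ?_⟩, ?_, ?_, ?_⟩, ?_, ?_, ?_, ⟨hmono, hstrict⟩, ?_⟩
  · -- complete
    intro x y
    rcases le_total (discSum δ y) (discSum δ x) with h | h
    · exact Or.inl ((hR x y).mpr h)
    · exact Or.inr ((hR y x).mpr h)
  · -- transitive
    intro x y z hxy hyz
    exact (hR x z).mpr (le_trans ((hR y z).mp hyz) ((hR x y).mp hxy))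
  · -- 1 ≻ 0
    apply hstrict
    · intro n; simp [cst]
    · intro hc
      have := congrArg (fun f : Linf => f 0) hc
      simp [cst] at this
  · -- A3
    intro x y z
    constructor
    · have hset : {α : ℝ | α ∈ Set.Icc (0:ℝ) 1 ∧ R (α • x + (1 - α) • z) y}
          = Set.Icc (0:ℝ) 1 ∩
            {α : ℝ | discSum δ y ≤ α * discSum δ x + (1 - α) * discSum δ z} := by
        ext α
        simp only [Set.mem_setOf_eq, Set.mem_inter_iff]
        rw [hR, discSum_combo hδ0.le hδ1]
      rw [hset]
      exact isClosed_Icc.inter (isClosed_le continuous_const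
        ((continuous_id.mul continuous_const).add
          ((continuous_const.sub continuous_id).mul continuous_const)))
    · have hset : {α : ℝ | α ∈ Set.Icc (0:ℝ) 1 ∧ R y (α • x + (1 - α) • z)}
          = Set.Icc (0:ℝ) 1 ∩
            {α : ℝ | α * discSum δ x + (1 - α) * discSum δ z ≤ discSum δ y} := by
        ext α
        simp only [Set.mem_setOf_eq, Set.mem_inter_iff]
        rw [hR, discSum_combo hδ0.le hδ1]
      rw [hset]
      exact isClosed_Icc.inter (isClosed_le
        ((continuous_id.mul continuous_const).add
          ((continuous_const.sub continuous_id).mul continuous_const)) continuous_const)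
  · -- A4
    intro x y θ hxy
    rw [hR] at hxy ⊢
    rw [discSum_add hδ0.le hδ1, discSum_add hδ0.le hδ1]
    linarith
  · -- A5
    intro x y θ lam hlam hx hy
    rw [hR] at hx hy ⊢
    rw [discSum_combo hδ0.le hδ1, discSum_const hδ0.le hδ1] at *
    nlinarith [hlam.1, hlam.2]
  · -- MC
    intro x θ hxθ E hdec hempty k
    have hθlt : θ < discSum δ x := by
      obtain ⟨h1, h2⟩ := hxθ
      rw [hR, discSum_const hδ0.le hδ1] at h1 h2
      exact lt_of_not_ge h2
    set ε : ℝ := discSum δ x - θ with hε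
    have hε0 : 0 < ε := by linarith
    obtain ⟨N, hN⟩ : ∃ N : ℕ, (|k| + ‖x‖) * δ ^ N < ε := by
      have htend : Filter.Tendsto (fun N : ℕ => (|k| + ‖x‖) * δ ^ N)
          Filter.atTop (nhds 0) := by
        simpa using (tendsto_pow_atTop_nhds_zero_of_lt_one hδ0.le hδ1).const_mul
          (|k| + ‖x‖)
      have := htend.eventually (eventually_lt_nhds hε0)
      exact this.exists
    obtain ⟨n₀, hn₀⟩ := exists_subset_Ici hdec hempty N
    refine ⟨n₀, ?_⟩
    have hb := discSum_patch_bound hδ0.le hδ1 k x hn₀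
    have hgt : θ < discSum δ (patch k (E n₀) x) := by
      have h1 := (abs_le.mp hb).1
      linarith
    constructor
    · rw [hR, discSum_const hδ0.le hδ1]; exact hgt.le
    · rw [hR, discSum_const hδ0.le hδ1]; exact not_le.mpr hgt
  · -- ISU
    intro x y α hα hxy
    rw [hR] at hxy ⊢
    rw [discSum_smul hδ0.le hδ1, discSum_smul hδ0.le hδ1]
    exact mul_le_mul_of_nonneg_left hxy hα
  · -- IOU
    intro x y z ⟨h1, h2⟩
    rw [hR] at h1 h2
    have heq : discSum δ x = discSum δ y := le_antisymm h2 h1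
    constructor <;> rw [hR, discSum_add hδ0.le hδ1, discSum_add hδ0.le hδ1, heq]
  · -- IDIS
    intro x d hxd
    rw [hR] at hxd ⊢
    rw [discSum_add hδ0.le hδ1] at hxd
    rw [discSum_add hδ0.le hδ1, discSum_delay hδ0.le hδ1]
    nlinarith


/-! ### pointwise helpers -/

lemma cst_apply (θ : ℝ) (n : ℕ) : cst θ n = θ := rfl

lemma cst_add (a b : ℝ) : cst a + cst b = cst (a + b) := by
  ext n; simp [cst]

lemma cst_smul (a θ : ℝ) : a • cst θ = cst (a * θ) := by
  ext n; simp [cst]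

lemma cst_zero : (0 : Linf) = cst 0 := by
  ext n; simp [cst]

open Classical in
lemma indic_apply (A : Set ℕ) (n : ℕ) :
    indic A n = if n ∈ A then 1 else 0 := by
  by_cases h : n ∈ A <;> simp [indic, ofSeq, h]

lemma delaySeq_apply (d : Linf) (n : ℕ) :
    delaySeq d n = if n = 0 then 0 else d (n - 1) := rfl

lemma delaySeq_neg (d : Linf) : delaySeq (-d) = -(delaySeq d) := by
  ext n
  by_cases h : n = 0 <;> simp [delaySeq_apply, h]

/-- `headFin n x = (x₀, ..., x_{n-1}, 0, 0, ...)`. -/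
def headFin (n : ℕ) (x : Linf) : Linf :=
  ∑ t ∈ Finset.range n, x t • indic {t}

lemma headFin_apply (n : ℕ) (x : Linf) (m : ℕ) :
    headFin n x m = if m < n then x m else 0 := by
  classical
  have : headFin n x m = ∑ t ∈ Finset.range n, x t * (if m = t then 1 else 0) := by
    simp [headFin, indic_apply]
  rw [this]
  by_cases h : m < n
  · rw [Finset.sum_eq_single m]
    · simp [h]
    · intro b _ hb
      have : m ≠ b := fun he => hb he.symm
      simp [this]
    · intro hm; exact absurd (Finset.mem_range.mpr h) (fun hh => hm hh)
  · rw [if_neg h, Finset.sum_eq_zero]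
    intro b hb
    have : m ≠ b := by
      intro he; exact h (he ▸ Finset.mem_range.mp hb)
    simp [this]

lemma headFin_add_tail (n : ℕ) : headFin n (cst 1) + indic (Set.Ici n) = cst 1 := by
  ext m
  by_cases h : m < n
  · simp [headFin_apply, indic_apply, cst_apply, h, Set.mem_Ici, not_le.mpr h]
  · simp [headFin_apply, indic_apply, cst_apply, h, Set.mem_Ici, not_lt.mp h]

lemma patch_head (n : ℕ) : patch 0 (Set.Ici n) (cst 1) = headFin n (cst 1) := by
  ext m
  rw [patch_apply, headFin_apply]
  by_cases h : m < n
  · simp [Set.mem_Ici, not_le.mpr h, h, cst_apply]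
  · simp [Set.mem_Ici, not_lt.mp h, h]


lemma cst_ne {a b : ℝ} (h : a ≠ b) : cst a ≠ cst b := by
  intro he
  exact h (by simpa [cst] using congrArg (fun f : Linf => f 0) he)

lemma exists_ce {R : Linf → Linf → Prop} (hcomp : ∀ x y, R x y ∨ R y x)
    (hA3 : A3 R) (hmono : ∀ x y : Linf, (∀ n, y n ≤ x n) → R x y) (x : Linf) :
    ∃ θ : ℝ, R x (cst θ) ∧ R (cst θ) x := by
  set a : ℝ := ‖x‖ with ha
  have hcombo : ∀ α : ℝ, α • cst a + (1 - α) • cst (-a) = cst (α * a + (1 - α) * (-a)) := by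
    intro α
    rw [cst_smul, cst_smul, cst_add]
  set t : Set ℝ := {α : ℝ | α ∈ Set.Icc (0:ℝ) 1 ∧ R (α • cst a + (1 - α) • cst (-a)) x}
    with ht
  set u : Set ℝ := {α : ℝ | α ∈ Set.Icc (0:ℝ) 1 ∧ R x (α • cst a + (1 - α) • cst (-a))}
    with hu
  have htc : IsClosed t := (hA3 (cst a) x (cst (-a))).1
  have huc : IsClosed u := (hA3 (cst a) x (cst (-a))).2
  have hcover : Set.Icc (0:ℝ) 1 ⊆ t ∪ u := by
    intro α hα
    rcases hcomp (α • cst a + (1 - α) • cst (-a)) x with h | h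
    · exact Or.inl ⟨hα, h⟩
    · exact Or.inr ⟨hα, h⟩
  have hnt : (Set.Icc (0:ℝ) 1 ∩ t).Nonempty := by
    refine ⟨1, ⟨by norm_num, by norm_num⟩, ⟨by norm_num, ?_⟩⟩
    rw [hcombo]
    have he : (1:ℝ) * a + (1 - 1) * (-a) = a := by ring
    rw [he]
    exact hmono _ _ (fun n => (abs_le.mp (linf_apply_le_norm x n)).2)
  have hnu : (Set.Icc (0:ℝ) 1 ∩ u).Nonempty := by
    refine ⟨0, ⟨by norm_num, by norm_num⟩, ⟨by norm_num, ?_⟩⟩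
    rw [hcombo]
    have he : (0:ℝ) * a + (1 - 0) * (-a) = -a := by ring
    rw [he]
    exact hmono _ _ (fun n => by
      have := (abs_le.mp (linf_apply_le_norm x n)).1
      simpa [cst] using this)
  obtain ⟨α, _, hαt, hαu⟩ :=
    (isPreconnected_closed_iff.mp isPreconnected_Icc) t u htc huc hcover hnt hnu
  refine ⟨α * a + (1 - α) * (-a), ?_, ?_⟩
  · have := hαu.2; rwa [hcombo] at this
  · have := hαt.2; rwa [hcombo] at this

lemma ce_uniq {R : Linf → Linf → Prop}
    (htrans : ∀ x y z, R x y → R y z → R x z) (hSM : StrongMono R)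
    {x : Linf} {θ θ' : ℝ} (h1 : R x (cst θ)) (h2 : R (cst θ) x)
    (h1' : R x (cst θ')) (h2' : R (cst θ') x) : θ = θ' := by
  by_contra hne
  rcases Ne.lt_or_gt hne with h | h
  · exact (hSM.2 (cst θ') (cst θ) (fun n => by simp [cst, h.le])
      (cst_ne (Ne.symm hne))).2 (htrans _ _ _ h2 h1')
  · exact (hSM.2 (cst θ) (cst θ') (fun n => by simp [cst, h.le])
      (cst_ne hne)).2 (htrans _ _ _ h2' h1)


set_option maxHeartbeats 1000000 in
lemma forward {R : Linf → Linf → Prop} (hA : A15 R) (hMC : MC R) (hISU : ISU R)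
    (hIOU : IOU R) (hSM : StrongMono R) (hIDIS : IDIS R) :
    ∃ δ : ℝ, δ ∈ Set.Ioo (0:ℝ) 1 ∧
      ConstEquiv R (fun x => discSum δ x) ∧ Represents R (fun x => discSum δ x) := by
  obtain ⟨⟨hcomp, htrans⟩, ⟨hmono, h10⟩, hA3, hA4, hA5⟩ := hA
  choose I hI1 hI2 using exists_ce hcomp hA3 hmono
  -- the functional `I` represents `R`
  have hRep : ∀ x y, R x y ↔ I y ≤ I x := by
    intro x y
    constructor
    · intro hxy
      by_contra hle
      push_neg at hle
      have hsp := hSM.2 (cst (I y)) (cst (I x))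
        (fun n => by simpa [cst_apply] using hle.le) (cst_ne (ne_of_gt hle))
      exact hsp.2 (htrans _ _ _ (hI2 x) (htrans _ _ _ hxy (hI1 y)))
    · intro h
      exact htrans _ _ _ (hI1 x) (htrans _ _ _
        (hmono _ _ (fun n => by simpa [cst_apply] using h)) (hI2 y))
  have hIcst : ∀ θ : ℝ, I (cst θ) = θ := by
    intro θ
    exact ce_uniq htrans hSM (hI1 _) (hI2 _)
      (hmono _ _ (fun n => le_refl _)) (hmono _ _ (fun n => le_refl _))
  have hIzero : I 0 = 0 := by rw [cst_zero]; exact hIcst 0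
  have hIadd : ∀ x y, I (x + y) = I x + I y := by
    intro x y
    have h1 := hIOU x (cst (I x)) y ⟨hI1 x, hI2 x⟩
    have h2 := hIOU y (cst (I y)) (cst (I x)) ⟨hI1 y, hI2 y⟩
    have e1 : cst (I x) + y = y + cst (I x) := add_comm _ _
    have e2 : cst (I y) + cst (I x) = cst (I x + I y) := by
      rw [cst_add, add_comm]
    rw [e1] at h1
    rw [e2] at h2
    have hxy1 : R (x + y) (cst (I x + I y)) := htrans _ _ _ h1.1 h2.1
    have hxy2 : R (cst (I x + I y)) (x + y) := htrans _ _ _ h2.2 h1.2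
    exact ce_uniq htrans hSM (hI1 _) (hI2 _) hxy1 hxy2
  have hIsmul_nonneg : ∀ a : ℝ, 0 ≤ a → ∀ x, I (a • x) = a * I x := by
    intro a ha x
    have h1 := hISU x (cst (I x)) a ha (hI1 x)
    have h2 := hISU (cst (I x)) x a ha (hI2 x)
    rw [cst_smul] at h1 h2
    exact ce_uniq htrans hSM (hI1 _) (hI2 _) h1 h2
  have hIneg : ∀ x, I (-x) = - I x := by
    intro x
    have := hIadd x (-x)
    rw [add_neg_cancel, hIzero] at this
    linarith
  have hIsmul : ∀ (a : ℝ) (x : Linf), I (a • x) = a * I x := by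
    intro a x
    rcases le_or_gt 0 a with ha | ha
    · exact hIsmul_nonneg a ha x
    · have h1 : a • x = -((-a) • x) := by ext n; simp
      rw [h1, hIneg, hIsmul_nonneg (-a) (by linarith) x]
      ring
  have hImono : ∀ x y : Linf, (∀ n, y n ≤ x n) → I y ≤ I x := by
    intro x y h
    exact (hRep x y).mp (hmono x y h)
  have hIstrict : ∀ x y : Linf, (∀ n, y n ≤ x n) → x ≠ y → I y < I x := by
    intro x y h hne
    have := (hSM.2 x y h hne).2
    rw [hRep] at this
    exact lt_of_not_ge this
  set f : ℕ → ℝ := fun t => I (indic {t}) with hf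
  have hf_pos : ∀ t, 0 < f t := by
    intro t
    have h0 : I (0 : Linf) < I (indic {t}) := by
      apply hIstrict
      · intro n; rw [indic_apply]; by_cases h : n ∈ ({t} : Set ℕ) <;> simp [h]
      · intro he
        have := congrArg (fun z : Linf => z t) he
        simp [indic_apply] at this
    rwa [hIzero] at h0
  have hIheadFin : ∀ (n : ℕ) (x : Linf),
      I (headFin n x) = ∑ t ∈ Finset.range n, x t * f t := by
    intro n x
    induction n with
    | zero => simp [headFin, hIzero]
    | succ n ih =>
      have : headFin (n+1) x = headFin n x + x n • indic {n} := by
        rw [headFin, Finset.sum_range_succ]; rfl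
      rw [this, hIadd, ih, hIsmul, Finset.sum_range_succ]
  set g : ℕ → ℝ := fun n => I (indic (Set.Ici n)) with hgdef
  have hg_sum : ∀ n, (∑ t ∈ Finset.range n, f t) + g n = 1 := by
    intro n
    have := hIadd (headFin n (cst 1)) (indic (Set.Ici n))
    rw [headFin_add_tail, hIcst, hIheadFin] at this
    simp only [cst_apply, one_mul] at this
    linarith [this]
  have hg_nonneg : ∀ n, 0 ≤ g n := by
    intro n
    have := hImono (indic (Set.Ici n)) 0 (fun m => by
      rw [indic_apply]; by_cases h : m ∈ Set.Ici n <;> simp [h])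
    rwa [hIzero] at this
  have hg_anti : ∀ m n, m ≤ n → g n ≤ g m := by
    intro m n hmn
    apply hImono
    intro a
    rw [indic_apply, indic_apply]
    by_cases h : a ∈ Set.Ici n
    · rw [if_pos h, if_pos (Set.mem_Ici.mpr (le_trans hmn (Set.mem_Ici.mp h)))]
    · rw [if_neg h]; by_cases h' : a ∈ Set.Ici m <;> simp [h']
  have hg_small : ∀ ε : ℝ, 0 < ε → ∃ n, g n < ε := by
    intro ε hε
    have hsp : SPref R (cst 1) (cst (1 - ε)) :=
      hSM.2 _ _ (fun n => by simp [cst_apply]; linarith) (cst_ne (by intro h; linarith))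
    obtain ⟨n₀, hn₀⟩ := hMC (cst 1) (1 - ε) hsp (fun n => Set.Ici n)
      (fun n a ha => le_trans (Nat.le_succ n) ha)
      (by
        apply Set.eq_empty_iff_forall_notMem.mpr
        intro m hm
        have := Set.mem_iInter.mp hm (m + 1)
        exact Nat.not_succ_le_self m this) 0
    rw [patch_head] at hn₀
    have hlt : 1 - ε < I (headFin n₀ (cst 1)) := by
      have := hn₀.2
      rw [hRep, hIcst] at this
      exact lt_of_not_ge this
    rw [hIheadFin] at hlt
    simp only [cst_apply, one_mul] at hlt
    have := hg_sum n₀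
    exact ⟨n₀, by linarith⟩
  have hg_tendsto : Filter.Tendsto g Filter.atTop (nhds 0) := by
    rw [Metric.tendsto_atTop]
    intro ε hε
    obtain ⟨n₀, hn₀⟩ := hg_small ε hε
    exact ⟨n₀, fun n hn => by
      rw [Real.dist_eq, sub_zero, abs_of_nonneg (hg_nonneg n)]
      exact lt_of_le_of_lt (hg_anti n₀ n hn) hn₀⟩
  have hf_summable : Summable f :=
    summable_of_sum_range_le (c := 1) (fun t => (hf_pos t).le)
      (fun n => by have h1 := hg_sum n; have h2 := hg_nonneg n; linarith)
  have hf_tsum : ∑' t, f t = 1 := by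
    have h1 : Filter.Tendsto (fun n => ∑ t ∈ Finset.range n, f t)
        Filter.atTop (nhds (∑' t, f t)) := hf_summable.hasSum.tendsto_sum_nat
    have h2 : Filter.Tendsto (fun n => ∑ t ∈ Finset.range n, f t)
        Filter.atTop (nhds 1) := by
      have h3 : Filter.Tendsto (fun n => 1 - g n) Filter.atTop (nhds 1) := by
        simpa using tendsto_const_nhds.sub hg_tendsto
      refine h3.congr (fun n => ?_)
      have := hg_sum n; linarith
    exact tendsto_nhds_unique h1 h2
  have htail : ∀ (x : Linf) (n : ℕ),
      |I x - ∑ t ∈ Finset.range n, x t * f t| ≤ ‖x‖ * g n := by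
    intro x n
    have hIx : I x = (∑ t ∈ Finset.range n, x t * f t) + I (x - headFin n x) := by
      have hdecomp : x = headFin n x + (x - headFin n x) := by
        rw [add_sub_cancel]
      conv_lhs => rw [hdecomp]
      rw [hIadd, hIheadFin]
    have hub : I (x - headFin n x) ≤ ‖x‖ * g n := by
      have h1 : ∀ m, (x - headFin n x) m ≤ (‖x‖ • indic (Set.Ici n)) m := by
        intro m
        simp only [BoundedContinuousFunction.coe_sub, Pi.sub_apply,
          BoundedContinuousFunction.coe_smul, Pi.smul_apply, smul_eq_mul]
        rw [headFin_apply, indic_apply]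
        by_cases h : m < n
        · simp [h, Set.mem_Ici, not_le.mpr h]
        · simp only [if_neg h, Set.mem_Ici, if_pos (not_lt.mp h), mul_one, sub_zero]
          exact (abs_le.mp (linf_apply_le_norm x m)).2
      have h2 := hImono _ _ h1
      rwa [hIsmul] at h2
    have hlb : -(‖x‖ * g n) ≤ I (x - headFin n x) := by
      have h1 : ∀ m, ((-‖x‖) • indic (Set.Ici n)) m ≤ (x - headFin n x) m := by
        intro m
        simp only [BoundedContinuousFunction.coe_sub, Pi.sub_apply,
          BoundedContinuousFunction.coe_smul, Pi.smul_apply, smul_eq_mul]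
        rw [headFin_apply, indic_apply]
        by_cases h : m < n
        · simp [h, Set.mem_Ici, not_le.mpr h]
        · simp only [if_neg h, Set.mem_Ici, if_pos (not_lt.mp h), mul_one, sub_zero]
          exact (abs_le.mp (linf_apply_le_norm x m)).1
      have h2 := hImono _ _ h1
      rw [hIsmul] at h2
      linarith
    rw [hIx, abs_le]
    constructor
    · have : (∑ t ∈ Finset.range n, x t * f t) + I (x - headFin n x)
          - ∑ t ∈ Finset.range n, x t * f t = I (x - headFin n x) := by ring
      rw [this]; linarith
    · have : (∑ t ∈ Finset.range n, x t * f t) + I (x - headFin n x)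
          - ∑ t ∈ Finset.range n, x t * f t = I (x - headFin n x) := by ring
      rw [this]; linarith
  have hdelay0 : ∀ d : Linf, I d = 0 → I (delaySeq d) = 0 := by
    have key : ∀ d : Linf, I d = 0 → 0 ≤ I (delaySeq d) := by
      intro d hd
      have h1 : R (0 + d) 0 := by
        rw [hRep, hIadd, hIzero, hd]
        norm_num
      have h2 := hIDIS 0 d h1
      rw [hRep, hIadd, hIzero] at h2
      simpa using h2
    intro d hd
    have ha := key d hd
    have hb := key (-d) (by rw [hIneg, hd]; ring)
    rw [delaySeq_neg, hIneg] at hb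
    linarith
  set δ : ℝ := f 1 / f 0 with hδdef
  have hδ0 : 0 < δ := div_pos (hf_pos 1) (hf_pos 0)
  have hrec : ∀ t, f (t + 1) = δ * f t := by
    intro t
    set c : ℝ := f t / f 0 with hc
    have hId : I (indic {t} + (-c) • indic {0}) = 0 := by
      rw [hIadd, hIsmul]
      have hne : f 0 ≠ 0 := ne_of_gt (hf_pos 0)
      have e1 : I (indic {t}) = f t := rfl
      have e2 : I (indic {0}) = f 0 := rfl
      rw [e1, e2, hc]
      field_simp
      ring
    have hdel : delaySeq (indic {t} + (-c) • indic {0})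
        = indic {t+1} + (-c) • indic {1} := by
      ext m
      cases m with
      | zero =>
        simp [delaySeq_apply, indic_apply, Set.mem_singleton_iff,
          (Nat.succ_ne_zero t).symm]
      | succ k =>
        simp only [delaySeq_apply, Nat.succ_ne_zero, if_false,
          Nat.add_sub_cancel, BoundedContinuousFunction.coe_add, Pi.add_apply,
          BoundedContinuousFunction.coe_smul, Pi.smul_apply, smul_eq_mul]
        rw [indic_apply, indic_apply, indic_apply, indic_apply]
        have e1 : (k + 1 ∈ ({t + 1} : Set ℕ)) = (k ∈ ({t} : Set ℕ)) := by
          simp [Set.mem_singleton_iff]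
        have e2 : (k + 1 ∈ ({1} : Set ℕ)) = (k ∈ ({0} : Set ℕ)) := by
          simp [Set.mem_singleton_iff]
        rw [e1, e2]
    have h0 := hdelay0 _ hId
    rw [hdel, hIadd, hIsmul] at h0
    have e1 : I (indic {t+1}) = f (t+1) := rfl
    have e2 : I (indic {1}) = f 1 := rfl
    rw [e1, e2] at h0
    have hne : f 0 ≠ 0 := ne_of_gt (hf_pos 0)
    have hft : f (t+1) = c * f 1 := by linarith
    rw [hft, hc, hδdef]
    ring
  have hgeom : ∀ t, f t = f 0 * δ ^ t := by
    intro t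
    induction t with
    | zero => simp
    | succ t ih => rw [hrec t, ih, pow_succ]; ring
  have hδ1 : δ < 1 := by
    by_contra hc
    push_neg at hc
    have htend := hf_summable.tendsto_atTop_zero
    obtain ⟨t, ht⟩ := (htend.eventually (eventually_lt_nhds (hf_pos 0))).exists
    have : f 0 ≤ f t := by
      rw [hgeom t]
      nlinarith [hf_pos 0, one_le_pow₀ hc (n := t)]
    linarith
  have hf0 : f 0 = 1 - δ := by
    have h1 : ∑' t, f t = f 0 * (1 - δ)⁻¹ := by
      rw [tsum_congr hgeom, tsum_mul_left, tsum_geometric_of_lt_one hδ0.le hδ1]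
    rw [hf_tsum] at h1
    have h2 : (1:ℝ) - δ ≠ 0 := by linarith
    field_simp at h1
    linarith
  have hfd : ∀ t, f t = (1 - δ) * δ ^ t := by
    intro t; rw [hgeom t, hf0]
  have hIeq : ∀ x, I x = discSum δ x := by
    intro x
    have h1 : Filter.Tendsto (fun n => ∑ t ∈ Finset.range n, x t * f t)
        Filter.atTop (nhds (discSum δ x)) := by
      have hh : HasSum (fun t => x t * f t) (discSum δ x) := by
        have h0 := ((summable_disc hδ0.le hδ1 x).hasSum).mul_left (1 - δ)
        have he : (fun t => (1 - δ) * (δ ^ t * x t)) = fun t => x t * f t := by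
          funext t; rw [hfd t]; ring
        rw [he] at h0
        exact h0
      exact hh.tendsto_sum_nat
    have h2 : Filter.Tendsto (fun n => ∑ t ∈ Finset.range n, x t * f t)
        Filter.atTop (nhds (I x)) := by
      rw [tendsto_iff_norm_sub_tendsto_zero]
      apply squeeze_zero (fun n => norm_nonneg _) (fun n => ?_)
        (by simpa using hg_tendsto.const_mul ‖x‖)
      rw [Real.norm_eq_abs, abs_sub_comm]
      exact htail x n
    exact tendsto_nhds_unique h2 h1
  refine ⟨δ, ⟨hδ0, hδ1⟩, fun x => ?_, fun x y => ?_⟩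
  · constructor
    · have := hI1 x; rwa [hIeq x] at this
    · have := hI2 x; rwa [hIeq x] at this
  · rw [hRep, hIeq, hIeq]


lemma discSum_e0 {δ : ℝ} : discSum δ (indic {0}) = 1 - δ := by
  unfold discSum
  have h : ∑' t, δ ^ t * indic {0} t = 1 := by
    rw [tsum_eq_single 0]
    · simp [indic_apply]
    · intro b hb
      have : b ∉ ({0} : Set ℕ) := by simpa using hb
      simp [indic_apply, this]
  rw [h, mul_one]

end EDU

/-- EDU representation. -/
theorem stmt2 (R : Linf → Linf → Prop) :
    (A15 R ∧ MC R ∧ ISU R ∧ IOU R ∧ StrongMono R ∧ IDIS R) ↔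
      ∃! δ : ℝ, δ ∈ Set.Ioo (0 : ℝ) 1 ∧
        ConstEquiv R (fun x => discSum δ x) ∧ Represents R (fun x => discSum δ x) := by
  constructor
  · rintro ⟨hA, hMC, hISU, hIOU, hSM, hIDIS⟩
    obtain ⟨δ, hδ, hCE, hRep⟩ := EDU.forward hA hMC hISU hIOU hSM hIDIS
    refine ⟨δ, ⟨hδ, hCE, hRep⟩, ?_⟩
    rintro δ' ⟨hδ', hCE', hRep'⟩
    have h1 := hCE (indic {0})
    have h2 := hCE' (indic {0})
    have heq := EDU.ce_uniq hA.1.2 hSM h2.1 h2.2 h1.1 h1.2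
    simp only [EDU.discSum_e0] at heq
    linarith
  · rintro ⟨δ, ⟨hδ, hCE, hRep⟩, _⟩
    exact EDU.backward hδ hRep

end
end

section
/- Let D be a closed subset of (0,1), let c : [0,1] → [0,∞] be grounded and lower semicontinuous with c(1) = ∞, and let ≿ be the binary relation on l∞ represented by I(x) = min_{δ∈[0,1)} { (1−δ)·Σ_{t=0}^∞ δ^t x_t + c(δ) } (i.e., x ≿ y iff I(x) ≥ I(y)). Then the following are equivalent: (i) Unanimity holds, i.e., for all x,y ∈ l∞, if (1−δ)·Σ_t δ^t x_t ≥ (1−δ)·Σ_t δ^t y_t for all δ ∈ D, then x ≿ y; (ii) c(δ) = ∞ for every δ ∈ [0,1) with δ ∉ D, so that I(x) = min_{δ∈D} { (1−δ)·Σ_{t=0}^∞ δ^t x_t + c(δ) }. -/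
open scoped ENNReal BoundedContinuousFunction

noncomputable section

/-! ### Auxiliary machinery for `stmt3` -/

/-- Finitely supported sequence with coefficients `c0, c1, c2`. -/
def q3 (c0 c1 c2 : ℝ) : Linf :=
  ofSeq (fun n => if n = 0 then c0 else if n = 1 then c1 else if n = 2 then c2 else 0)
    (|c0| + |c1| + |c2|) (by
      intro n
      have h0 := abs_nonneg c0
      have h1 := abs_nonneg c1
      have h2 := abs_nonneg c2
      show |if n = 0 then c0 else if n = 1 then c1 else if n = 2 then c2 else 0| ≤ _
      split_ifs <;>
        first
        | (exact le_trans (le_abs_self _) (by linarith [abs_abs c0, abs_abs c1, abs_abs c2]))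
        | (rw [abs_zero]; linarith))

lemma q3_apply (c0 c1 c2 : ℝ) (n : ℕ) :
    q3 c0 c1 c2 n = if n = 0 then c0 else if n = 1 then c1 else if n = 2 then c2 else 0 := rfl

lemma discSum_zero (δ : ℝ) : discSum δ (0 : Linf) = 0 := by simp [discSum]

lemma discSum_q3 (c0 c1 c2 δ : ℝ) :
    discSum δ (q3 c0 c1 c2) = (1 - δ) * (c0 + c1 * δ + c2 * δ ^ 2) := by
  unfold discSum
  congr 1
  rw [tsum_eq_sum (s := Finset.range 3)]
  · simp [Finset.sum_range_succ, q3_apply]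
    ring
  · intro b hb
    have hb3 : ¬ b < 3 := by simpa using hb
    rw [q3_apply]
    have : ¬ b = 0 := by omega
    have : ¬ b = 1 := by omega
    have : ¬ b = 2 := by omega
    simp_all

lemma enn_coe (a : ℝ≥0∞) (h : a ≠ ⊤) : (a : EReal) = ((a.toReal : ℝ) : EReal) := by
  rw [← EReal.toReal_coe_ennreal]
  exact (EReal.coe_toReal (by simp [h]) (EReal.coe_ennreal_ne_bot _)).symm

/-- aggregation of exponential discounting experts: for a variational
discounting preference with cost `c` and set of experts' discount factors `D`, Unanimity
holds iff `c(δ) = ∞` for every `δ ∉ D`, in which case the minimum can be taken over `D`. -/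
theorem stmt3 (D : Set ℝ) (hD : D ⊆ Set.Ioo (0 : ℝ) 1) (hDclosed : IsClosed D)
    (c : ℝ → ℝ≥0∞) (hg : Grounded01 c) (hlsc : LowerSemicontinuousOn c (Set.Icc 0 1))
    (hc1 : c 1 = ⊤) (I : Linf → ℝ) (hI : VarMinDelta (Set.Ico (0 : ℝ) 1) c I)
    (R : Linf → Linf → Prop) (hR : ∀ x y, R x y ↔ I y ≤ I x) :
    (∀ x y : Linf, (∀ δ ∈ D, discSum δ y ≤ discSum δ x) → R x y) ↔
      ((∀ δ ∈ Set.Ico (0 : ℝ) 1, δ ∉ D → c δ = ⊤) ∧ VarMinDelta D c I) := by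
  -- turning the `EReal` equality at an attaining `δ` into a real one
  have key : ∀ (x : Linf) (δ : ℝ),
      (I x : EReal) = (discSum δ x : EReal) + (c δ : EReal) →
      c δ ≠ ⊤ ∧ I x = discSum δ x + (c δ).toReal := by
    intro x δ heq
    have hne : c δ ≠ ⊤ := by
      intro h
      rw [h, EReal.coe_ennreal_top, EReal.coe_add_top] at heq
      exact EReal.coe_ne_top _ heq
    refine ⟨hne, ?_⟩
    rw [enn_coe _ hne, ← EReal.coe_add] at heq
    exact_mod_cast heq
  have keyle : ∀ (x : Linf) (s δ : ℝ), c δ ≠ ⊤ →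
      (s : EReal) ≤ (discSum δ x : EReal) + (c δ : EReal) →
      s ≤ discSum δ x + (c δ).toReal := by
    intro x s δ hne hle
    rw [enn_coe _ hne, ← EReal.coe_add] at hle
    exact_mod_cast hle
  constructor
  · intro hU
    -- `I 0 ≥ 0`
    have hI0 : 0 ≤ I 0 := by
      obtain ⟨δ, hδ, heq⟩ := (hI 0).1
      obtain ⟨hne, heqR⟩ := key 0 δ heq
      rw [discSum_zero, zero_add] at heqR
      rw [heqR]
      exact ENNReal.toReal_nonneg
    have part1 : ∀ δ ∈ Set.Ico (0 : ℝ) 1, δ ∉ D → c δ = ⊤ := by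
      intro δ₀ hδ₀ hδ₀D
      by_contra hne
      obtain ⟨ε, hε, hball⟩ := Metric.isOpen_iff.1 hDclosed.isOpen_compl δ₀ hδ₀D
      set r := (c δ₀).toReal with hrdef
      have hr0 : 0 ≤ r := ENNReal.toReal_nonneg
      have h1δ : 0 < 1 - δ₀ := by linarith [hδ₀.2]
      set lam := (2 * (r + 1)) / ((1 - δ₀) * ε ^ 2) with hlamdef
      have hlam : 0 < lam := by positivity
      set x := q3 (lam * (δ₀ ^ 2 - ε ^ 2 / 2)) (-(2 * lam * δ₀)) lam with hxdef
      have hds : ∀ δ : ℝ, discSum δ x = (1 - δ) * (lam * ((δ - δ₀) ^ 2 - ε ^ 2 / 2)) := by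
        intro δ
        rw [hxdef, discSum_q3]
        ring
      have hRx0 : R x 0 := by
        refine hU x 0 ?_
        intro δ hδ
        rw [discSum_zero, hds]
        have h1 : δ < 1 := (hD hδ).2
        have h2 : ε ≤ |δ - δ₀| := by
          by_contra hcon
          push_neg at hcon
          have : δ ∈ Metric.ball δ₀ ε := by
            simpa [Real.dist_eq] using hcon
          exact (hball this) hδ
        have h3 : ε ^ 2 ≤ (δ - δ₀) ^ 2 := by
          rw [← sq_abs (δ - δ₀)]
          exact pow_le_pow_left₀ hε.le h2 2
        have h4 : 0 < (δ - δ₀) ^ 2 - ε ^ 2 / 2 := by nlinarith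
        exact le_of_lt (mul_pos (by linarith) (mul_pos hlam h4))
      have hle1 : I 0 ≤ I x := (hR x 0).1 hRx0
      have hle2 : I x ≤ discSum δ₀ x + r :=
        keyle x (I x) δ₀ hne ((hI x).2 δ₀ hδ₀)
      have hdsx : discSum δ₀ x = -(r + 1) := by
        rw [hds, hlamdef]
        field_simp
        ring
      rw [hdsx] at hle2
      linarith
    refine ⟨part1, ?_⟩
    intro x
    constructor
    · obtain ⟨δ, hδ, heq⟩ := (hI x).1
      refine ⟨δ, ?_, heq⟩
      by_contra hδD
      exact (key x δ heq).1 (part1 δ hδ hδD)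
    · intro δ hδ
      exact (hI x).2 δ ⟨(hD hδ).1.le, (hD hδ).2⟩
  · rintro ⟨h1, h2⟩ x y hxy
    rw [hR]
    obtain ⟨δ, hδD, heq⟩ := (h2 x).1
    obtain ⟨hne, heqR⟩ := key x δ heq
    have hley : I y ≤ discSum δ y + (c δ).toReal :=
      keyle y (I y) δ hne ((h2 y).2 δ hδD)
    have := hxy δ hδD
    linarith


end
end

section
/- Let T : l∞ → l∞ be a continuous positive linear map with adjoint T*, and let Δ(T*) = { p ∈ Δ : there exists λ ∈ ℝ with ⟨T(x), p⟩ = λ·⟨x, p⟩ for all x ∈ l∞ }. (i) If a binary relation ≿ on l∞ satisfies axioms (A1)–(A5), ISU, and ITIS, then there exists a nonempty weak*-closed set D ⊆ Δ(T*) such that I(x) = min_{p∈D} ⟨x,p⟩ is the unique constant equivalent representing ≿. (ii) Conversely, if ⟨1, T*(p)⟩ ≤ 1 for every p ∈ Δ(T*) and I(x) = min_{p∈D} ⟨x,p⟩ for some nonempty weak*-closed D ⊆ Δ(T*), then the relation ≿ represented by I satisfies axioms (A1)–(A5), ISU, and ITIS. -/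
open scoped ENNReal BoundedContinuousFunction

noncomputable section

namespace S7

open Filter Topology

lemma cst_apply (θ : ℝ) (n : ℕ) : cst θ n = θ := rfl
lemma cst_zero : cst 0 = 0 := rfl
lemma cst_smul (a b : ℝ) : a • cst b = cst (a * b) := rfl
lemma cst_one_smul (a : ℝ) : a • cst 1 = cst a := by rw [cst_smul, mul_one]
lemma cst_add (a b : ℝ) : cst a + cst b = cst (a + b) := rfl
lemma cst_congr {a b : ℝ} (h : a = b) : cst a = cst b := by rw [h]
lemma abs_apply_le (x : Linf) (n : ℕ) : |x n| ≤ ‖x‖ := by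
  simpa [Real.norm_eq_abs] using x.norm_coe_le_norm n
lemma apply_le_norm (x : Linf) (n : ℕ) : x n ≤ ‖x‖ := (abs_le.1 (abs_apply_le x n)).2
lemma neg_norm_le_apply (x : Linf) (n : ℕ) : -‖x‖ ≤ x n := (abs_le.1 (abs_apply_le x n)).1

lemma map_cst (p : Ba) (θ : ℝ) : p (cst θ) = θ * p (cst 1) := by
  rw [← cst_one_smul θ, map_smul]; rfl

lemma pos_map_le_norm (p : Ba) (hp : ∀ y : Linf, (∀ n, 0 ≤ y n) → 0 ≤ p y)
    (h1 : p (cst 1) = 1) (x : Linf) : p x ≤ ‖x‖ := by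
  have h := hp (cst ‖x‖ - x) (fun n => by
    simpa [cst_apply] using apply_le_norm x n)
  have h2 : p (cst ‖x‖ - x) = ‖x‖ * p (cst 1) - p x := by rw [map_sub, map_cst]
  rw [h2, h1, mul_one] at h; linarith

lemma neg_norm_le_pos_map (p : Ba) (hp : ∀ y : Linf, (∀ n, 0 ≤ y n) → 0 ≤ p y)
    (h1 : p (cst 1) = 1) (x : Linf) : -‖x‖ ≤ p x := by
  have := pos_map_le_norm p hp h1 (-x)
  rw [map_neg, norm_neg] at this; linarith

lemma abs_pos_map_le (p : Ba) (hp : ∀ y : Linf, (∀ n, 0 ≤ y n) → 0 ≤ p y)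
    (h1 : p (cst 1) = 1) (x : Linf) : |p x| ≤ ‖x‖ :=
  abs_le.2 ⟨neg_norm_le_pos_map p hp h1 x, pos_map_le_norm p hp h1 x⟩

lemma mix_cst (α a b : ℝ) : α • cst a + (1 - α) • cst b = cst (α * a + (1 - α) * b) := by
  rw [cst_smul, cst_smul, cst_add]

section PartA
variable {R : Linf → Linf → Prop}

lemma not_cst_le (h15 : A15 R) (hisu : ISU R) {a b : ℝ} (hab : a < b) :
    ¬ R (cst a) (cst b) := by
  obtain ⟨⟨hcomp, htrans⟩, ⟨hmono, hstrict⟩, hA3, hA4, hA5⟩ := h15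
  intro h
  have hba : (0:ℝ) < b - a := by linarith
  have h1 : R ((b - a)⁻¹ • cst a) ((b - a)⁻¹ • cst b) :=
    hisu _ _ _ (inv_nonneg.2 hba.le) h
  rw [cst_smul, cst_smul] at h1
  have h2 := hA4 _ _ (-((b-a)⁻¹ * a)) h1
  rw [cst_add, cst_add] at h2
  have e1 : (b - a)⁻¹ * a + -((b - a)⁻¹ * a) = 0 := by ring
  have e2 : (b - a)⁻¹ * b + -((b - a)⁻¹ * a) = 1 := by field_simp; ring
  rw [e1, e2] at h2
  exact hstrict.2 h2

lemma partA (h15 : A15 R) (hisu : ISU R) :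
    ∃ I : Linf → ℝ,
      ConstEquiv R I ∧ Represents R I ∧ (∀ θ, I (cst θ) = θ) ∧
      (∀ x y : Linf, (∀ n, y n ≤ x n) → I y ≤ I x) ∧
      (∀ x θ, I (x + cst θ) = I x + θ) ∧
      (∀ (a : ℝ) x, 0 ≤ a → I (a • x) = a * I x) ∧
      (∀ x y, I x + I y ≤ I (x + y)) := by
  have hnotle : ∀ {a b : ℝ}, a < b → ¬ R (cst a) (cst b) := fun h => not_cst_le h15 hisu h
  obtain ⟨⟨hcomp, htrans⟩, ⟨hmono, hstrict⟩, hA3, hA4, hA5⟩ := h15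
  set I := fun x : Linf => sSup {θ | R x (cst θ)} with hIdef
  have hcstm : ∀ {a b : ℝ}, a ≤ b → R (cst b) (cst a) := fun {a b} h => hmono _ _ (fun n => h)
  have hmem_lb : ∀ x : Linf, -‖x‖ ∈ {θ | R x (cst θ)} := fun x => hmono _ _ (neg_norm_le_apply x)
  have hub : ∀ x : Linf, ∀ θ ∈ {θ | R x (cst θ)}, θ ≤ ‖x‖ := by
    intro x θ hθ
    by_contra hgt; push_neg at hgt
    exact hnotle hgt (htrans _ _ _ (hmono (cst ‖x‖) x fun n => apply_le_norm x n) hθ)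
  have hbdd : ∀ x, BddAbove {θ | R x (cst θ)} := fun x => ⟨‖x‖, hub x⟩
  have hne : ∀ x, {θ | R x (cst θ)}.Nonempty := fun x => ⟨-‖x‖, hmem_lb x⟩
  have hIub : ∀ x, I x ≤ ‖x‖ := fun x => csSup_le (hne x) (hub x)
  have hIlb : ∀ x, -‖x‖ ≤ I x := fun x => le_csSup (hbdd x) (hmem_lb x)
  -- closed slices
  have hclosed1 : ∀ (x : Linf) (M : ℝ), 0 < M →
      IsClosed ({θ | R x (cst θ)} ∩ Set.Icc (-M) M) := by
    intro x M hM
    have h2M : (0:ℝ) < 2 * M := by linarith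
    have key : {θ | R x (cst θ)} ∩ Set.Icc (-M) M =
        (fun θ : ℝ => (θ + M)/(2*M)) ⁻¹'
          {α : ℝ | α ∈ Set.Icc (0:ℝ) 1 ∧ R x (α • cst M + (1-α) • cst (-M))} := by
      ext θ
      have hmix : ((θ + M)/(2*M)) • cst M + (1 - (θ + M)/(2*M)) • cst (-M) = cst θ := by
        rw [mix_cst]
        exact cst_congr (by field_simp; ring)
      simp only [Set.mem_inter_iff, Set.mem_setOf_eq, Set.mem_Icc, Set.mem_preimage, hmix]
      constructor
      · rintro ⟨h1, h2, h3⟩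
        exact ⟨⟨div_nonneg (by linarith) h2M.le, (div_le_one h2M).2 (by linarith)⟩, h1⟩
      · rintro ⟨⟨h1, h2⟩, h3⟩
        have e1 : -M ≤ θ := by nlinarith [(le_div_iff₀ h2M).1 h1]
        have e2 : θ ≤ M := by nlinarith [(div_le_one h2M).1 h2]
        exact ⟨h3, e1, e2⟩
    rw [key]
    exact ((hA3 (cst M) x (cst (-M))).2).preimage
      ((continuous_id.add continuous_const).div_const (2*M))
  have hclosed2 : ∀ (x : Linf) (M : ℝ), 0 < M →
      IsClosed ({θ | R (cst θ) x} ∩ Set.Icc (-M) M) := by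
    intro x M hM
    have h2M : (0:ℝ) < 2 * M := by linarith
    have key : {θ | R (cst θ) x} ∩ Set.Icc (-M) M =
        (fun θ : ℝ => (θ + M)/(2*M)) ⁻¹'
          {α : ℝ | α ∈ Set.Icc (0:ℝ) 1 ∧ R (α • cst M + (1-α) • cst (-M)) x} := by
      ext θ
      have hmix : ((θ + M)/(2*M)) • cst M + (1 - (θ + M)/(2*M)) • cst (-M) = cst θ := by
        rw [mix_cst]
        exact cst_congr (by field_simp; ring)
      simp only [Set.mem_inter_iff, Set.mem_setOf_eq, Set.mem_Icc, Set.mem_preimage, hmix]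
      constructor
      · rintro ⟨h1, h2, h3⟩
        exact ⟨⟨div_nonneg (by linarith) h2M.le, (div_le_one h2M).2 (by linarith)⟩, h1⟩
      · rintro ⟨⟨h1, h2⟩, h3⟩
        have e1 : -M ≤ θ := by nlinarith [(le_div_iff₀ h2M).1 h1]
        have e2 : θ ≤ M := by nlinarith [(div_le_one h2M).1 h2]
        exact ⟨h3, e1, e2⟩
    rw [key]
    exact ((hA3 (cst M) x (cst (-M))).1).preimage
      ((continuous_id.add continuous_const).div_const (2*M))
  -- x ≿ cst (I x)
  have hxI : ∀ x, R x (cst (I x)) := by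
    intro x
    set M := ‖x‖ + 1 with hM
    have hM0 : (0:ℝ) < M := by positivity
    set Sc := {θ | R x (cst θ)} ∩ Set.Icc (-M) M with hSc
    have hScne : Sc.Nonempty :=
      ⟨-‖x‖, hmem_lb x, ⟨by simp only [hM]; linarith, by simp only [hM]; linarith [norm_nonneg x]⟩⟩
    have hScbdd : BddAbove Sc := ⟨M, fun θ hθ => hθ.2.2⟩
    have hmem := (hclosed1 x M hM0).csSup_mem hScne hScbdd
    have heq : sSup Sc = I x := by
      apply le_antisymm
      · exact csSup_le hScne (fun θ hθ => le_csSup (hbdd x) hθ.1)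
      · apply csSup_le (hne x); intro θ hθ
        rcases le_or_gt (-M) θ with h | h
        · exact le_csSup hScbdd ⟨hθ, h, le_trans (hub x θ hθ) (by simp only [hM]; linarith)⟩
        · calc θ ≤ -‖x‖ := by simp only [hM] at h; linarith
            _ ≤ sSup Sc := le_csSup hScbdd ⟨hmem_lb x,
                ⟨by simp only [hM]; linarith, by simp only [hM]; linarith [norm_nonneg x]⟩⟩
    rw [← heq]
    exact hmem.1
  -- cst (I x) ≿ x
  have hS2 : ∀ (x : Linf) (θ : ℝ), I x < θ → R (cst θ) x := by
    intro x θ hθ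
    rcases hcomp (cst θ) x with h | h
    · exact h
    · exact absurd (le_csSup (hbdd x) h) (not_le.2 hθ)
  have hlow : ∀ (x : Linf) (θ : ℝ), R (cst θ) x → I x ≤ θ := by
    intro x θ h
    by_contra hc; push_neg at hc
    obtain ⟨θ', hθ', hlt⟩ := exists_lt_of_lt_csSup (hne x) hc
    exact hnotle hlt (htrans _ _ _ h hθ')
  have hIx : ∀ x, R (cst (I x)) x := by
    intro x
    set M := ‖x‖ + 1 with hM
    have hM0 : (0:ℝ) < M := by positivity
    set Sc := {θ | R (cst θ) x} ∩ Set.Icc (-M) M with hSc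
    have hMmem : M ∈ Sc := ⟨hS2 x M (lt_of_le_of_lt (hIub x) (by simp only [hM]; linarith)),
      ⟨by simp only [hM]; linarith, le_rfl⟩⟩
    have hScne : Sc.Nonempty := ⟨M, hMmem⟩
    have hScbdd : BddBelow Sc := ⟨-M, fun θ hθ => hθ.2.1⟩
    have hmem := (hclosed2 x M hM0).csInf_mem hScne hScbdd
    have heq : sInf Sc = I x := by
      apply le_antisymm
      · by_contra h; push_neg at h
        have hIM : -M < I x := lt_of_lt_of_le (by simp only [hM]; linarith [hIlb x]) le_rfl
        set θ := (I x + sInf Sc)/2 with hθdef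
        have h1 : I x < θ := by simp only [hθdef]; linarith
        have h2 : θ < sInf Sc := by simp only [hθdef]; linarith
        have hSM : sInf Sc ≤ M := csInf_le hScbdd hMmem
        have hmem' : θ ∈ Sc := ⟨hS2 x θ h1,
          ⟨by simp only [hM] at *; linarith [hIlb x], by linarith⟩⟩
        exact absurd (csInf_le hScbdd hmem') (not_le.2 h2)
      · exact le_csInf hScne (fun θ hθ => hlow x θ hθ.1)
    rw [← heq]
    exact hmem.1
  have hrep : ∀ x y, R x y ↔ I y ≤ I x := by
    intro x y
    constructor
    · intro h; exact le_csSup (hbdd x) (htrans _ _ _ h (hxI y))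
    · intro h; exact htrans _ _ _ (hxI x) (htrans _ _ _ (hcstm h) (hIx y))
  have hIcst : ∀ θ, I (cst θ) = θ := by
    intro θ
    apply le_antisymm
    · exact hlow (cst θ) θ (hmono _ _ (fun n => le_rfl))
    · exact le_csSup (hbdd _) (hmono _ _ (fun n => le_rfl))
  have hImono : ∀ x y : Linf, (∀ n, y n ≤ x n) → I y ≤ I x :=
    fun x y h => (hrep x y).1 (hmono x y h)
  have hRc : ∀ (z : Linf) (θ : ℝ), R z (cst θ) ↔ θ ≤ I z := by
    intro z θ; rw [hrep, hIcst]
  have htransl : ∀ (x : Linf) (θ : ℝ), I (x + cst θ) = I x + θ := by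
    intro x θ
    have h1 : R (x + cst θ) (cst (I x + θ)) := by
      have := hA4 x (cst (I x)) θ (hxI x); rwa [cst_add] at this
    have h2 : R (cst (I x + θ)) (x + cst θ) := by
      have := hA4 (cst (I x)) x θ (hIx x); rwa [cst_add] at this
    have e1 := (hrep _ _).1 h1
    have e2 := (hrep _ _).1 h2
    rw [hIcst] at e1 e2
    linarith
  have hhomog : ∀ (a : ℝ) (x : Linf), 0 ≤ a → I (a • x) = a * I x := by
    intro a x ha
    have h1 := hisu x (cst (I x)) a ha (hxI x)
    have h2 := hisu (cst (I x)) x a ha (hIx x)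
    rw [cst_smul] at h1 h2
    have e1 := (hrep _ _).1 h1
    have e2 := (hrep _ _).1 h2
    rw [hIcst] at e1 e2
    linarith
  have hsuper : ∀ x y, I x + I y ≤ I (x + y) := by
    intro x y
    set a := I x with hadef
    set b := I y with hbdef
    have hx' : R (x + cst ((b-a)/2)) (cst ((a+b)/2)) := by
      rw [hRc, htransl]; linarith
    have hy' : R (y + cst ((a-b)/2)) (cst ((a+b)/2)) := by
      rw [hRc, htransl]; linarith
    have h5 := hA5 _ _ ((a+b)/2) (1/2) ⟨by norm_num, by norm_num⟩ hx' hy'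
    have hc : cst ((b-a)/2) + cst ((a-b)/2) = (0 : Linf) := by
      rw [cst_add, show (b-a)/2 + ((a-b)/2) = 0 by ring]; rfl
    have heq : (1/2 : ℝ) • (x + cst ((b-a)/2)) + (1 - (1/2 : ℝ)) • (y + cst ((a-b)/2))
        = (1/2 : ℝ) • (x + y) := by
      ext n
      simp only [BoundedContinuousFunction.coe_add, BoundedContinuousFunction.coe_smul,
        Pi.add_apply, Pi.smul_apply, smul_eq_mul, cst_apply]
      ring
    rw [heq] at h5
    have h6 := (hRc _ _).1 h5
    rw [hhomog (1/2) (x+y) (by norm_num)] at h6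
    linarith
  exact ⟨I, fun x => ⟨hxI x, hIx x⟩, hrep, hIcst, hImono, htransl, hhomog, hsuper⟩

end PartA

section PartB

lemma smul_neg' (c : ℝ) (y : Linf) : -(c • y) = c • (-y) := by
  ext n
  simp only [BoundedContinuousFunction.coe_neg, BoundedContinuousFunction.coe_smul,
    Pi.neg_apply, Pi.smul_apply, smul_eq_mul]
  ring

lemma neg_smul'' (c : ℝ) (y : Linf) : -(c • y) = (-c) • y := by
  ext n
  simp only [BoundedContinuousFunction.coe_neg, BoundedContinuousFunction.coe_smul,
    Pi.neg_apply, Pi.smul_apply, smul_eq_mul]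
  ring

lemma hbpoint {I : Linf → ℝ}
    (hIcst : ∀ θ, I (cst θ) = θ)
    (hImono : ∀ x y : Linf, (∀ n, y n ≤ x n) → I y ≤ I x)
    (htransl : ∀ (x : Linf) (θ : ℝ), I (x + cst θ) = I x + θ)
    (hhomog : ∀ (a : ℝ) (x : Linf), 0 ≤ a → I (a • x) = a * I x)
    (hsuper : ∀ x y, I x + I y ≤ I (x + y)) (x : Linf) :
    ∃ p : Ba, (∀ y : Linf, (∀ n, 0 ≤ y n) → 0 ≤ p y) ∧ p (cst 1) = 1 ∧
      (∀ y, I y ≤ p y) ∧ p x = I x := by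
  have h0 : I 0 = 0 := by rw [← cst_zero, hIcst]
  have hIub : ∀ y : Linf, I y ≤ ‖y‖ := by
    intro y
    have := hImono (cst ‖y‖) y (fun n => by rw [cst_apply]; exact apply_le_norm y n)
    rwa [hIcst] at this
  have hIlb : ∀ y : Linf, -‖y‖ ≤ I y := by
    intro y
    have := hImono y (cst (-‖y‖)) (fun n => by rw [cst_apply]; exact neg_norm_le_apply y n)
    rwa [hIcst] at this
  have hnegsum : ∀ y : Linf, I y + I (-y) ≤ 0 := by
    intro y
    have := hsuper y (-y)
    rwa [add_neg_cancel, h0] at this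
  set N : Linf → ℝ := fun y => -I (-y) with hN
  have N_hom : ∀ c : ℝ, 0 < c → ∀ y : Linf, N (c • y) = c * N y := by
    intro c hc y
    simp only [hN]
    rw [smul_neg', hhomog c _ hc.le]
    ring
  have N_add : ∀ y z : Linf, N (y + z) ≤ N y + N z := by
    intro y z
    simp only [hN]
    have := hsuper (-y) (-z)
    rw [← neg_add] at this
    linarith
  -- shift x so that it is nonzero
  set x' : Linf := x + cst (‖x‖ + 1) with hx'def
  have hx'0 : 0 < x' 0 := by
    have h1 : x' 0 = x 0 + (‖x‖ + 1) := rfl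
    have := neg_norm_le_apply x 0
    rw [h1]; linarith
  have hx'ne : x' ≠ 0 := by
    intro h
    rw [h] at hx'0
    have h00 : (0 : Linf) 0 = 0 := rfl
    rw [h00] at hx'0
    exact lt_irrefl _ hx'0
  set f := LinearPMap.mkSpanSingleton (K := ℝ) (L := ℝ) (σ := RingHom.id ℝ) x' (I x') hx'ne with hf
  have hdom : ∀ z : f.domain, f z ≤ N (z : Linf) := by
    rintro ⟨z, hz⟩
    obtain ⟨t, ht⟩ := Submodule.mem_span_singleton.1 hz
    have happ : f ⟨z, hz⟩ = t • I x' := by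
      have h1 : f ⟨t • x', by rw [ht]; exact hz⟩ = t • I x' :=
        LinearPMap.mkSpanSingleton'_apply _ _ _ t _
      rw [← h1]
      congr 1
      exact Subtype.ext ht.symm
    rw [happ]
    have hcoe : ((⟨z, hz⟩ : f.domain) : Linf) = z := rfl
    rw [hcoe, ← ht]
    simp only [hN, smul_eq_mul]
    rcases le_or_gt 0 t with htpos | htneg
    · have h2 := hnegsum (t • x')
      rw [hhomog t x' htpos] at h2
      linarith
    · rw [neg_smul'', hhomog (-t) x' (by linarith)]
      linarith
  obtain ⟨g, hg1, hg2⟩ := exists_extension_of_le_sublinear f N N_hom N_add hdom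
  have hgx' : g x' = I x' := by
    have h1 := hg1 ⟨x', Submodule.mem_span_singleton_self x'⟩
    have h2 : f ⟨x', Submodule.mem_span_singleton_self x'⟩ = I x' :=
      LinearPMap.mkSpanSingleton_apply ℝ ℝ hx'ne (I x')
    rw [← h2]
    exact h1
  have hgeI : ∀ y, I y ≤ g y := by
    intro y
    have h1 := hg2 (-y)
    rw [map_neg] at h1
    simp only [hN, neg_neg] at h1
    linarith
  have hgub : ∀ y, g y ≤ ‖y‖ := by
    intro y
    have h1 := hg2 y
    simp only [hN] at h1
    have h2 := hIlb (-y)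
    rw [norm_neg] at h2
    linarith
  have hgbound : ∀ y : Linf, ‖g y‖ ≤ 1 * ‖y‖ := by
    intro y
    rw [Real.norm_eq_abs, one_mul]
    refine abs_le.2 ⟨?_, hgub y⟩
    have h1 := hgub (-y)
    rw [map_neg, norm_neg] at h1
    linarith
  set p : Ba := LinearMap.mkContinuous g 1 hgbound with hp
  have hpy : ∀ y : Linf, p y = g y := fun y => rfl
  have hp1 : p (cst 1) = 1 := by
    rw [hpy]
    have h1 := hgeI (cst 1)
    rw [hIcst] at h1
    have h2 := hg2 (cst 1)
    have h3 : -(cst 1) = cst (-1) := rfl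
    simp only [hN, h3, hIcst] at h2
    linarith
  refine ⟨p, ?_, hp1, ?_, ?_⟩
  · intro y hy
    rw [hpy]
    have h1 : I 0 ≤ I y := hImono y 0 (fun n => hy n)
    rw [h0] at h1
    linarith [hgeI y]
  · intro y
    rw [hpy]
    exact hgeI y
  · have e1 : (p : Ba) x' = p x + (‖x‖ + 1) * p (cst 1) := by
      rw [hx'def, map_add, map_cst]
    have e2 : I x' = I x + (‖x‖ + 1) := by rw [hx'def, htransl]
    have e3 : (p : Ba) x' = g x' := rfl
    rw [e3, hgx', e2, hp1, mul_one] at e1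
    linarith

end PartB

section PartC

lemma add_apply' (p q : Ba) (y : Linf) : (p + q) y = p y + q y := rfl
lemma smul_apply' (a : ℝ) (p : Ba) (y : Linf) : (a • p) y = a * p y := rfl
lemma zero_apply' (y : Linf) : (0 : Ba) y = 0 := rfl

lemma sum_apply' (s : Finset ℕ) (f : ℕ → Ba) (y : Linf) :
    (∑ n ∈ s, f n) y = ∑ n ∈ s, f n y := by
  classical
  induction s using Finset.induction_on with
  | empty => rfl
  | insert _ _ hni ih =>
      rw [Finset.sum_insert hni, Finset.sum_insert hni, add_apply', ih]


/-- The set of positive normalized functionals dominating `I` and touching it at `x`. -/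
def Kset (I : Linf → ℝ) (x : Linf) : Set Ba :=
  {p | (∀ y : Linf, (∀ n, 0 ≤ y n) → 0 ≤ p y) ∧ p (cst 1) = 1 ∧
    (∀ y, I y ≤ p y) ∧ p x = I x}

lemma isClosed_Kset (I : Linf → ℝ) (x : Linf) : IsClosed (Kset I x) := by
  have h1 : IsClosed {p : Ba | ∀ y : Linf, (∀ n, 0 ≤ y n) → 0 ≤ p y} := by
    have e : {p : Ba | ∀ y : Linf, (∀ n, 0 ≤ y n) → 0 ≤ p y} =
        ⋂ (y : Linf) (_ : ∀ n, 0 ≤ y n), {p : Ba | 0 ≤ p y} := by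
      ext p; simp only [Set.mem_setOf_eq, Set.mem_iInter]
    rw [e]
    exact isClosed_iInter fun y => isClosed_iInter fun _ =>
      isClosed_le continuous_const (WeakDual.eval_continuous y)
  have h2 : IsClosed {p : Ba | p (cst 1) = 1} :=
    isClosed_eq (WeakDual.eval_continuous (cst 1)) continuous_const
  have h3 : IsClosed {p : Ba | ∀ y, I y ≤ p y} := by
    have e : {p : Ba | ∀ y, I y ≤ p y} = ⋂ (y : Linf), {p : Ba | I y ≤ p y} := by
      ext p; simp only [Set.mem_setOf_eq, Set.mem_iInter]
    rw [e]
    exact isClosed_iInter fun y =>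
      isClosed_le continuous_const (WeakDual.eval_continuous y)
  have h4 : IsClosed {p : Ba | p x = I x} :=
    isClosed_eq (WeakDual.eval_continuous x) continuous_const
  have e : Kset I x = {p : Ba | ∀ y : Linf, (∀ n, 0 ≤ y n) → 0 ≤ p y} ∩
      ({p : Ba | p (cst 1) = 1} ∩ ({p : Ba | ∀ y, I y ≤ p y} ∩ {p : Ba | p x = I x})) := by
    ext p
    simp only [Kset, Set.mem_setOf_eq, Set.mem_inter_iff]
  rw [e]
  exact h1.inter (h2.inter (h3.inter h4))

lemma isCompact_Kset (I : Linf → ℝ) (x : Linf) : IsCompact (Kset I x) := by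
  refine IsCompact.of_isClosed_subset
    (WeakDual.isCompact_closedBall (0 : StrongDual ℝ Linf) 1)
    (isClosed_Kset I x) ?_
  intro p hp
  have hb : ‖WeakDual.toStrongDual p‖ ≤ 1 := by
    refine ContinuousLinearMap.opNorm_le_bound _ zero_le_one fun y => ?_
    rw [one_mul, Real.norm_eq_abs]
    exact abs_pos_map_le p hp.1 hp.2.1 y
  simp only [Set.mem_preimage, Metric.mem_closedBall, dist_zero_right]
  exact hb

/-- Normalized adjoint action. -/
def Phi (T : Linf →L[ℝ] Linf) (p : Ba) : Ba :=
  (p (T (cst 1)))⁻¹ • (ContinuousLinearMap.comp (p : Linf →L[ℝ] ℝ) T)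

lemma Phi_apply (T : Linf →L[ℝ] Linf) (p : Ba) (y : Linf) :
    Phi T p y = (p (T (cst 1)))⁻¹ * p (T y) := rfl

lemma PhiMem (T : Linf →L[ℝ] Linf) (I : Linf → ℝ)
    (hpos : ∀ y : Linf, (∀ n, 0 ≤ y n) → ∀ n, 0 ≤ T y n)
    (hIcst : ∀ θ, I (cst θ) = θ)
    (htransl : ∀ (x : Linf) (θ : ℝ), I (x + cst θ) = I x + θ)
    (hsuper : ∀ x y, I x + I y ≤ I (x + y))
    (hITI : ∀ x d : Linf, I x ≤ I (x + d) → I x ≤ I (x + T d))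
    {x : Linf} {p : Ba} (hp : p ∈ Kset I x) (hl : 0 < p (T (cst 1))) :
    Phi T p ∈ Kset I x := by
  obtain ⟨hppos, hp1, hpge, hpx⟩ := hp
  set lam := p (T (cst 1)) with hlam
  -- key: improving directions have nonnegative image
  have hkey : ∀ d : Linf, I x ≤ I (x + d) → 0 ≤ p (T d) := by
    intro d hd
    have h1 := hITI x d hd
    have h2 : I (x + T d) ≤ p (x + T d) := hpge _
    have h3 : p (x + T d) = p x + p (T d) := map_add p x (T d)
    rw [h3, hpx] at h2
    linarith
  have hTcst : ∀ c : ℝ, p (T (cst c)) = c * lam := by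
    intro c
    have e : cst c = c • cst 1 := (cst_one_smul c).symm
    rw [e, map_smul, map_smul]
    rfl
  -- lower bound : lam * I d ≤ p (T d)
  have hlb : ∀ d : Linf, lam * I d ≤ p (T d) := by
    intro d
    have haux : ∀ ε : ℝ, 0 < ε → lam * (I d - ε) ≤ p (T d) := by
      intro ε hε
      have h1 : I x ≤ I (x + (d + cst (ε - I d))) := by
        have h2 := hsuper x (d + cst (ε - I d))
        rw [htransl] at h2
        linarith
      have h3 := hkey _ h1
      have h4 : p (T (d + cst (ε - I d))) = p (T d) + (ε - I d) * lam := by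
        rw [map_add, map_add, hTcst]
      rw [h4] at h3
      nlinarith
    by_contra hc
    push_neg at hc
    set ε := (lam * I d - p (T d)) / (2 * lam) with hεdef
    have hεpos : 0 < ε := div_pos (by linarith) (by linarith)
    have h5 := haux ε hεpos
    have hle : lam * ε = (lam * I d - p (T d)) / 2 := by
      rw [hεdef]; field_simp
    have hexp : lam * (I d - ε) = lam * I d - lam * ε := by ring
    linarith
  -- upper bound at x : p (T x) ≤ lam * I x
  have hub : p (T x) ≤ lam * I x := by
    have h1 : I x ≤ I (x + (cst (I x) - x)) := by
      have e : x + (cst (I x) - x) = cst (I x) := by abel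
      rw [e, hIcst]
    have h2 := hkey _ h1
    have h3 : p (T (cst (I x) - x)) = I x * lam - p (T x) := by
      rw [map_sub, map_sub, hTcst]
    rw [h3] at h2
    linarith
  have hlinv : 0 < lam⁻¹ := inv_pos.2 hl
  refine ⟨?_, ?_, ?_, ?_⟩
  · intro y hy
    rw [Phi_apply, ← hlam]
    exact mul_nonneg hlinv.le (hppos (T y) (hpos y hy))
  · rw [Phi_apply, ← hlam]
    exact inv_mul_cancel₀ hl.ne'
  · intro y
    rw [Phi_apply, ← hlam]
    have h1 := hlb y
    calc I y = lam⁻¹ * (lam * I y) := by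
          rw [← mul_assoc, inv_mul_cancel₀ hl.ne', one_mul]
    _ ≤ lam⁻¹ * p (T y) := mul_le_mul_of_nonneg_left h1 hlinv.le
  · rw [Phi_apply, ← hlam]
    have h1 := hlb x
    have h2 : p (T x) = lam * I x := le_antisymm hub h1
    rw [h2, ← mul_assoc, inv_mul_cancel₀ hl.ne', one_mul]

set_option maxHeartbeats 2000000 in
lemma eigen_exists (T : Linf →L[ℝ] Linf) (I : Linf → ℝ)
    (hpos : ∀ y : Linf, (∀ n, 0 ≤ y n) → ∀ n, 0 ≤ T y n)
    (hIcst : ∀ θ, I (cst θ) = θ)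
    (hImono : ∀ x y : Linf, (∀ n, y n ≤ x n) → I y ≤ I x)
    (htransl : ∀ (x : Linf) (θ : ℝ), I (x + cst θ) = I x + θ)
    (hhomog : ∀ (a : ℝ) (x : Linf), 0 ≤ a → I (a • x) = a * I x)
    (hsuper : ∀ x y, I x + I y ≤ I (x + y))
    (hITI : ∀ x d : Linf, I x ≤ I (x + d) → I x ≤ I (x + T d))
    (x : Linf) :
    ∃ q ∈ Kset I x, ∀ y : Linf, q (T y) = q (T (cst 1)) * q y := by
  obtain ⟨p₀, hp₀pos, hp₀1, hp₀ge, hp₀x⟩ := hbpoint hIcst hImono htransl hhomog hsuper x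
  have hp₀K : p₀ ∈ Kset I x := ⟨hp₀pos, hp₀1, hp₀ge, hp₀x⟩
  have hT1 : ∀ n, 0 ≤ T (cst 1) n := hpos (cst 1) (fun n => by rw [cst_apply]; norm_num)
  by_cases hz : ∃ p ∈ Kset I x, p (T (cst 1)) = 0
  · obtain ⟨p, hpK, hp0⟩ := hz
    refine ⟨p, hpK, fun y => ?_⟩
    rw [hp0, zero_mul]
    have hsubpos : ∀ y : Linf, ∀ n, 0 ≤ (cst ‖y‖ - y) n := by
      intro y n
      simp only [BoundedContinuousFunction.coe_sub, Pi.sub_apply, cst_apply]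
      have := apply_le_norm y n; linarith
    have haddpos : ∀ y : Linf, ∀ n, 0 ≤ (cst ‖y‖ + y) n := by
      intro y n
      simp only [BoundedContinuousFunction.coe_add, Pi.add_apply, cst_apply]
      have := neg_norm_le_apply y n; linarith
    have hTsm : ∀ r : ℝ, p (T (cst r)) = r * p (T (cst 1)) := by
      intro r
      rw [← cst_one_smul r, map_smul, map_smul]; rfl
    have h1 : 0 ≤ p (T (cst ‖y‖ - y)) := hpK.1 _ (hpos _ (hsubpos y))
    have h2 : 0 ≤ p (T (cst ‖y‖ + y)) := hpK.1 _ (hpos _ (haddpos y))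
    rw [map_sub, map_sub, hTsm, hp0, mul_zero] at h1
    rw [map_add, map_add, hTsm, hp0, mul_zero] at h2
    linarith
  · push_neg at hz
    have hlpos : ∀ p ∈ Kset I x, 0 < p (T (cst 1)) := by
      intro p hpK
      exact lt_of_le_of_ne (hpK.1 _ hT1) (Ne.symm (hz p hpK))
    have hKc := isCompact_Kset I x
    have hKne : (Kset I x).Nonempty := ⟨p₀, hp₀K⟩
    obtain ⟨pm, hpmK, hpmmin⟩ := hKc.exists_isMinOn hKne
      ((WeakDual.eval_continuous (T (cst 1))).continuousOn)
    obtain ⟨pM, hpMK, hpMmax⟩ := hKc.exists_isMaxOn hKne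
      ((WeakDual.eval_continuous (T (cst 1))).continuousOn)
    set m := pm (T (cst 1)) with hmdef
    set L := pM (T (cst 1)) with hLdef
    have hm0 : 0 < m := hlpos pm hpmK
    have hL0 : 0 < L := hlpos pM hpMK
    have hmle : ∀ p ∈ Kset I x, m ≤ p (T (cst 1)) := fun p hp => isMinOn_iff.1 hpmmin p hp
    have hLge : ∀ p ∈ Kset I x, p (T (cst 1)) ≤ L := fun p hp => isMaxOn_iff.1 hpMmax p hp
    set P : ℕ → Ba := fun n => (Phi T)^[n] p₀ with hPdef
    have hPsucc : ∀ n, P (n+1) = Phi T (P n) := fun n => Function.iterate_succ_apply' (Phi T) n p₀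
    have hPK : ∀ n, P n ∈ Kset I x := by
      intro n; induction n with
      | zero => simpa only [hPdef, Function.iterate_zero_apply] using hp₀K
      | succ n ih =>
          rw [hPsucc]
          exact PhiMem T I hpos hIcst htransl hsuper hITI ih (hlpos _ ih)
    set lam : ℕ → ℝ := fun n => (P n) (T (cst 1)) with hlamdef
    have hlam0 : ∀ n, 0 < lam n := fun n => hlpos _ (hPK n)
    have hlamm : ∀ n, m ≤ lam n := fun n => hmle _ (hPK n)
    have hlamL : ∀ n, lam n ≤ L := fun n => hLge _ (hPK n)
    have happ : ∀ (n : ℕ) (y : Linf), (P n) (T y) = lam n * (P (n+1)) y := by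
      intro n y
      rw [hPsucc, Phi_apply, ← mul_assoc, mul_inv_cancel₀ (hlam0 n).ne', one_mul]
    set c : ℕ → ℝ := fun n => ∏ i ∈ Finset.range n, lam i with hcdef
    have hc0 : c 0 = 1 := Finset.prod_range_zero _
    have hcsucc : ∀ n, c (n+1) = c n * lam n := fun n => Finset.prod_range_succ _ _
    have hcpos : ∀ n, 0 < c n := fun n => Finset.prod_pos (fun i _ => hlam0 i)
    have hclb : ∀ n, m ^ n ≤ c n := by
      intro n
      have h := Finset.prod_le_prod (s := Finset.range n) (f := fun _ => m) (g := lam)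
        (fun i _ => hm0.le) (fun i _ => hlamm i)
      simpa using h
    have hcub : ∀ n, c n ≤ L ^ n := by
      intro n
      have h := Finset.prod_le_prod (s := Finset.range n) (f := lam) (g := fun _ => L)
        (fun i _ => (hlam0 i).le) (fun i _ => hlamL i)
      simpa using h
    set V : Set ℝ := {μ | 0 < μ ∧ ∃ B : ℝ, ∀ n, c n ≤ B * μ ^ n} with hVdef
    have hLV : L ∈ V := ⟨hL0, 1, fun n => by rw [one_mul]; exact hcub n⟩
    have hVlb : ∀ μ ∈ V, m ≤ μ := by
      rintro μ ⟨hμ0, B, hB⟩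
      by_contra hlt; push_neg at hlt
      have h1 : (1:ℝ) < m / μ := (one_lt_div hμ0).2 hlt
      obtain ⟨n, hn⟩ := pow_unbounded_of_one_lt B h1
      have h2 : m ^ n ≤ B * μ ^ n := le_trans (hclb n) (hB n)
      have h3 : (m / μ) ^ n ≤ B := by
        rw [div_pow, div_le_iff₀ (pow_pos hμ0 n)]
        exact h2
      exact absurd h3 (not_le.2 hn)
    have hVbdd : BddBelow V := ⟨0, fun μ hμ => hμ.1.le⟩
    have hVne : V.Nonempty := ⟨L, hLV⟩
    set ρ := sInf V with hρdef
    have hρm : m ≤ ρ := le_csInf hVne hVlb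
    have hρL : ρ ≤ L := csInf_le hVbdd hLV
    have hρ0 : 0 < ρ := lt_of_lt_of_le hm0 hρm
    -- approximate eigenvectors
    have hseq : ∀ k : ℕ, ∃ q ∈ Kset I x, ∀ y : Linf,
        |q (T y) - ρ * q y| ≤ 3 * L * (1/(k+1)) * ‖y‖ := by
      intro k
      set ε : ℝ := 1 / (k+1) with hεdef
      have hε0 : 0 < ε := by positivity
      set μ : ℝ := ρ / (1 + ε/2) with hμdef
      have hμ0 : 0 < μ := div_pos hρ0 (by linarith)
      have hμρ : μ < ρ := by
        rw [hμdef, div_lt_iff₀ (by linarith)]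
        nlinarith
      have hμL : μ ≤ L := le_trans hμρ.le hρL
      have hμε : ρ < μ * (1 + ε) := by
        rw [hμdef, div_mul_eq_mul_div, lt_div_iff₀ (by linarith)]
        nlinarith
      have hρμ : ρ - μ ≤ L * ε := by
        have h1 : ρ - ρ / (1 + ε/2) = ρ * (ε/2) / (1 + ε/2) := by
          field_simp; ring
        have h2 : ρ * (ε/2) / (1 + ε/2) ≤ ρ * (ε/2) :=
          div_le_self (by positivity) (by linarith)
        rw [hμdef, h1]
        calc ρ * (ε/2) / (1 + ε/2) ≤ ρ * (ε/2) := h2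
        _ ≤ L * (ε/2) := mul_le_mul_of_nonneg_right hρL (by positivity)
        _ ≤ L * ε := mul_le_mul_of_nonneg_left (by linarith) hL0.le
      set t : ℕ → ℝ := fun n => c n / μ ^ n with htdef
      have ht0 : ∀ n, 0 < t n := fun n => div_pos (hcpos n) (pow_pos hμ0 n)
      set Z : ℕ → ℝ := fun N => ∑ n ∈ Finset.range N, t n with hZdef
      have hZsucc : ∀ N, Z (N+1) = Z N + t N := fun N => Finset.sum_range_succ _ _
      have hZnn : ∀ N, 0 ≤ Z N := fun N => Finset.sum_nonneg fun i _ => (ht0 i).le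
      have hZmono : ∀ N₁ N₂, N₁ ≤ N₂ → Z N₁ ≤ Z N₂ := by
        intro N₁ N₂ h
        exact Finset.sum_le_sum_of_subset_of_nonneg
          (Finset.range_subset_range.2 h) (fun i _ _ => (ht0 i).le)
      have hunb : ∀ B : ℝ, ∃ n, B < t n := by
        intro B
        by_contra hb; push_neg at hb
        have hμV : μ ∈ V := ⟨hμ0, B, fun n => by
          have h := hb n
          simp only [htdef] at h
          exact (div_le_iff₀ (pow_pos hμ0 n)).1 h⟩
        exact absurd (csInf_le hVbdd hμV) (not_le.2 hμρ)
      have hZunb : ∀ B : ℝ, ∃ N, B < Z N := by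
        intro B
        obtain ⟨n, hn⟩ := hunb B
        exact ⟨n+1, lt_of_lt_of_le hn (by rw [hZsucc]; linarith [hZnn n])⟩
      obtain ⟨N₀, hN₀⟩ := hZunb (k+1)
      have hgood : ∃ N, N₀ ≤ N ∧ t N ≤ ε * Z N := by
        by_contra hbad; push_neg at hbad
        have hZN₀pos : 0 < Z N₀ := lt_of_le_of_lt (by positivity) hN₀
        have hgrow : ∀ j : ℕ, (1+ε)^j * Z N₀ ≤ Z (N₀ + j) := by
          intro j; induction j with
          | zero => simp
          | succ j ih =>
              have h1 := hbad (N₀ + j) (Nat.le_add_right _ _)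
              have h2 : Z (N₀ + (j+1)) = Z (N₀ + j) + t (N₀ + j) := hZsucc (N₀ + j)
              have h3 : (0:ℝ) < (1+ε)^j := pow_pos (by linarith) j
              have h4 : (1+ε)^(j+1) = (1+ε)^j * (1+ε) := pow_succ _ _
              nlinarith [hZmono N₀ (N₀ + j) (Nat.le_add_right _ _)]
        obtain ⟨σ, hσV, hσlt⟩ := exists_lt_of_csInf_lt hVne hμε
        obtain ⟨hσ0, B, hB⟩ := hσV
        have hr1 : 1 < (1+ε) * μ / σ := by
          rw [lt_div_iff₀ hσ0, one_mul]
          calc σ < μ * (1+ε) := hσlt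
          _ = (1+ε) * μ := by ring
        obtain ⟨j, hj⟩ := pow_unbounded_of_one_lt (B * σ ^ N₀ / (ε * Z N₀ * μ ^ N₀)) hr1
        have hCb : ((1+ε) * μ / σ) ^ j ≤ B * σ ^ N₀ / (ε * Z N₀ * μ ^ N₀) := by
          have h1 : ε * Z (N₀ + j) < t (N₀ + j) := hbad _ (Nat.le_add_right _ _)
          have h3 : c (N₀ + j) ≤ B * σ ^ (N₀ + j) := hB _
          have h6 : ε * Z (N₀+j) * μ ^ (N₀+j) < c (N₀ + j) := by
            have h7 : t (N₀ + j) = c (N₀ + j) / μ ^ (N₀ + j) := rfl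
            rw [h7, lt_div_iff₀ (pow_pos hμ0 _)] at h1
            exact h1
          have h5 : ε * ((1+ε)^j * Z N₀) ≤ ε * Z (N₀ + j) :=
            mul_le_mul_of_nonneg_left (hgrow j) hε0.le
          have h4 : ε * ((1+ε)^j * Z N₀) * (μ ^ N₀ * μ ^ j) ≤ B * (σ ^ N₀ * σ ^ j) := by
            rw [← pow_add, ← pow_add]
            calc ε * ((1+ε)^j * Z N₀) * μ ^ (N₀ + j)
                ≤ ε * Z (N₀+j) * μ ^ (N₀+j) :=
                  mul_le_mul_of_nonneg_right h5 (pow_pos hμ0 _).le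
            _ ≤ c (N₀ + j) := h6.le
            _ ≤ B * σ ^ (N₀ + j) := h3
          have hd1 : 0 < ε * Z N₀ * μ ^ N₀ := by positivity
          have hd2 : 0 < (σ:ℝ) ^ j := pow_pos hσ0 j
          rw [div_pow, div_le_div_iff₀ hd2 hd1]
          have e2 : ((1+ε)*μ)^j * (ε * Z N₀ * μ ^ N₀)
              = ε * ((1+ε)^j * Z N₀) * (μ ^ N₀ * μ ^ j) := by
            rw [mul_pow]; ring
          have e3 : B * σ ^ N₀ * σ ^ j = B * (σ ^ N₀ * σ ^ j) := by ring
          rw [e2, e3]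
          exact h4
        exact absurd hCb (not_le.2 hj)
      obtain ⟨N, hNge, hNgood⟩ := hgood
      have hZN : (k+1:ℝ) < Z N := lt_of_lt_of_le hN₀ (hZmono _ _ hNge)
      have hZNpos : 0 < Z N := lt_of_le_of_lt (by positivity) hZN
      set q : Ba := (Z N)⁻¹ • (∑ n ∈ Finset.range N, t n • P n) with hqdef
      have hqy : ∀ y : Linf, q y = (Z N)⁻¹ * ∑ n ∈ Finset.range N, t n * P n y := by
        intro y
        rw [hqdef, smul_apply', sum_apply']
        simp only [smul_apply']
      have hqK : q ∈ Kset I x := by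
        refine ⟨?_, ?_, ?_, ?_⟩
        · intro y hy
          rw [hqy]
          exact mul_nonneg (inv_nonneg.2 hZNpos.le)
            (Finset.sum_nonneg fun n _ => mul_nonneg (ht0 n).le ((hPK n).1 y hy))
        · rw [hqy]
          have h1 : ∑ n ∈ Finset.range N, t n * P n (cst 1) = Z N :=
            Finset.sum_congr rfl fun n _ => by rw [(hPK n).2.1, mul_one]
          rw [h1]; exact inv_mul_cancel₀ hZNpos.ne'
        · intro y
          rw [hqy]
          have h1 : Z N * I y ≤ ∑ n ∈ Finset.range N, t n * P n y := by
            have h2 : Z N * I y = ∑ n ∈ Finset.range N, t n * I y := by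
              rw [hZdef, Finset.sum_mul]
            rw [h2]
            exact Finset.sum_le_sum fun n _ =>
              mul_le_mul_of_nonneg_left ((hPK n).2.2.1 y) (ht0 n).le
          calc I y = (Z N)⁻¹ * (Z N * I y) := by
                rw [← mul_assoc, inv_mul_cancel₀ hZNpos.ne', one_mul]
          _ ≤ _ := mul_le_mul_of_nonneg_left h1 (inv_nonneg.2 hZNpos.le)
        · rw [hqy]
          have h1 : ∑ n ∈ Finset.range N, t n * P n x = Z N * I x := by
            have h2 : Z N * I x = ∑ n ∈ Finset.range N, t n * I x := by
              rw [hZdef, Finset.sum_mul]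
            rw [h2]
            exact Finset.sum_congr rfl fun n _ => by rw [(hPK n).2.2.2]
          rw [h1, ← mul_assoc, inv_mul_cancel₀ hZNpos.ne', one_mul]
      refine ⟨q, hqK, ?_⟩
      intro y
      have htel : q (T y) = μ * q y + μ * (Z N)⁻¹ * (t N * P N y - P 0 y) := by
        have e1 : ∀ n : ℕ, t n * P n (T y) = μ * (t (n+1) * P (n+1) y) := by
          intro n
          have e2 : μ * t (n+1) = t n * lam n := by
            simp only [htdef]
            rw [hcsucc n, pow_succ]
            field_simp
          calc t n * P n (T y) = t n * (lam n * P (n+1) y) := by rw [happ n y]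
          _ = (μ * t (n+1)) * P (n+1) y := by rw [e2]; ring
          _ = μ * (t (n+1) * P (n+1) y) := by ring
        have e3 : ∑ n ∈ Finset.range N, t n * P n (T y)
            = μ * ∑ n ∈ Finset.range N, t (n+1) * P (n+1) y := by
          rw [Finset.mul_sum]
          exact Finset.sum_congr rfl fun n _ => e1 n
        have e5 := Finset.sum_range_succ' (fun n => t n * P n y) N
        have e6 := Finset.sum_range_succ (fun n => t n * P n y) N
        have e4 : ∑ n ∈ Finset.range N, t (n+1) * P (n+1) y
            = (∑ n ∈ Finset.range N, t n * P n y) + t N * P N y - t 0 * P 0 y := by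
          rw [e6] at e5
          linarith
        have ht00 : t 0 = 1 := by
          simp only [htdef]
          rw [hc0, pow_zero, div_one]
        rw [hqy (T y), e3, e4, ht00, one_mul, hqy y]
        ring
      have hPb : ∀ (n : ℕ) (z : Linf), |P n z| ≤ ‖z‖ :=
        fun n z => abs_pos_map_le (P n) (hPK n).1 (hPK n).2.1 z
      have hZinv : (Z N)⁻¹ ≤ ε := by
        have h1 : (Z N)⁻¹ ≤ ((k:ℝ)+1)⁻¹ := inv_anti₀ (by positivity) hZN.le
        rw [hεdef, one_div]
        exact h1
      have htN : (Z N)⁻¹ * t N ≤ ε := by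
        rw [inv_mul_le_iff₀ hZNpos]
        calc t N ≤ ε * Z N := hNgood
        _ = Z N * ε := by ring
      have herr : |q (T y) - μ * q y| ≤ 2 * L * ε * ‖y‖ := by
        rw [htel]
        have h1 : μ * q y + μ * (Z N)⁻¹ * (t N * P N y - P 0 y) - μ * q y
            = μ * (Z N)⁻¹ * (t N * P N y - P 0 y) := by ring
        rw [h1, abs_mul]
        have h2 : |t N * P N y - P 0 y| ≤ t N * ‖y‖ + ‖y‖ := by
          have e : t N * P N y - P 0 y = t N * P N y + (-(P 0 y)) := by ring
          rw [e]
          calc |t N * P N y + (-(P 0 y))| ≤ |t N * P N y| + |(-(P 0 y))| := abs_add_le _ _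
          _ = |t N * P N y| + |P 0 y| := by rw [abs_neg]
          _ ≤ t N * ‖y‖ + ‖y‖ := by
              rw [abs_mul, abs_of_pos (ht0 N)]
              exact add_le_add (mul_le_mul_of_nonneg_left (hPb N y) (ht0 N).le) (hPb 0 y)
        have h3 : |μ * (Z N)⁻¹| = μ * (Z N)⁻¹ := abs_of_pos (by positivity)
        rw [h3]
        calc μ * (Z N)⁻¹ * |t N * P N y - P 0 y| ≤ μ * (Z N)⁻¹ * (t N * ‖y‖ + ‖y‖) :=
              mul_le_mul_of_nonneg_left h2 (by positivity)
        _ = μ * (((Z N)⁻¹ * t N) * ‖y‖ + (Z N)⁻¹ * ‖y‖) := by ring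
        _ ≤ μ * (ε * ‖y‖ + ε * ‖y‖) := by
            apply mul_le_mul_of_nonneg_left _ hμ0.le
            have := norm_nonneg y
            nlinarith [htN, hZinv]
        _ = μ * (2 * ε * ‖y‖) := by ring
        _ ≤ L * (2 * ε * ‖y‖) := by
            apply mul_le_mul_of_nonneg_right hμL
            positivity
        _ = 2 * L * ε * ‖y‖ := by ring
      have hqb : |q y| ≤ ‖y‖ := abs_pos_map_le q hqK.1 hqK.2.1 y
      have h5 : |q (T y) - ρ * q y| ≤ |q (T y) - μ * q y| + |(ρ - μ) * q y| := by
        have e : q (T y) - ρ * q y = (q (T y) - μ * q y) + (-((ρ - μ) * q y)) := by ring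
        rw [e]
        calc |(q (T y) - μ * q y) + (-((ρ - μ) * q y))|
            ≤ |q (T y) - μ * q y| + |(-((ρ - μ) * q y))| := abs_add_le _ _
        _ = |q (T y) - μ * q y| + |(ρ - μ) * q y| := by rw [abs_neg]
      have h6 : |(ρ - μ) * q y| ≤ L * ε * ‖y‖ := by
        rw [abs_mul, abs_of_nonneg (by linarith : (0:ℝ) ≤ ρ - μ)]
        calc (ρ - μ) * |q y| ≤ (L * ε) * ‖y‖ :=
              mul_le_mul hρμ hqb (abs_nonneg _) (by positivity)
        _ = L * ε * ‖y‖ := by ring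
      calc |q (T y) - ρ * q y| ≤ |q (T y) - μ * q y| + |(ρ - μ) * q y| := h5
      _ ≤ 2 * L * ε * ‖y‖ + L * ε * ‖y‖ := add_le_add herr h6
      _ = 3 * L * ε * ‖y‖ := by ring
    choose qs hqsK hqsb using hseq
    have hmapne : (Filter.map qs Filter.atTop).NeBot := Filter.map_neBot
    obtain ⟨qstar, hqstarK, hcl⟩ := hKc.exists_clusterPt
      (f := Filter.map qs Filter.atTop)
      (Filter.le_principal_iff.2 (Filter.mem_map.2 (Filter.univ_mem' fun k => hqsK k)))
    have heig : ∀ y : Linf, qstar (T y) = ρ * qstar y := by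
      intro y
      set g : Ba → ℝ := fun p => p (T y) - ρ * p y with hgdef
      have hgc : Continuous g :=
        (WeakDual.eval_continuous (T y)).sub (continuous_const.mul (WeakDual.eval_continuous y))
      have htend : Filter.Tendsto (fun k => g (qs k)) Filter.atTop (nhds 0) := by
        apply squeeze_zero_norm (a := fun k : ℕ => 3 * L * (1/(k+1)) * ‖y‖)
        · intro k; rw [Real.norm_eq_abs]; exact hqsb k y
        · have h0 : Filter.Tendsto (fun k : ℕ => 1/((k:ℝ)+1)) Filter.atTop (nhds 0) :=
            tendsto_one_div_add_atTop_nhds_zero_nat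
          have h1 : Filter.Tendsto (fun k : ℕ => 3 * L * (1/((k:ℝ)+1)) * ‖y‖)
              Filter.atTop (nhds (3 * L * ‖y‖ * 0)) := by
            refine Filter.Tendsto.congr (fun k => ?_) (h0.const_mul (3 * L * ‖y‖))
            ring
          rw [mul_zero] at h1
          exact h1
      have hclg : ClusterPt (g qstar) (Filter.map (fun k => g (qs k)) Filter.atTop) := by
        refine ClusterPt.map hcl hgc.continuousAt ?_
        rw [Filter.tendsto_map'_iff]
        exact Filter.tendsto_map
      have hzero : g qstar = 0 := by
        have hle : Filter.map (fun k => g (qs k)) Filter.atTop ≤ nhds 0 := htend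
        have hne : (nhds (g qstar) ⊓ nhds (0:ℝ)).NeBot := hclg.mono hle
        exact t2_iff_nhds.1 (inferInstance) hne
      have h4 : qstar (T y) - ρ * qstar y = 0 := hzero
      linarith
    refine ⟨qstar, hqstarK, fun y => ?_⟩
    have h1 := heig (cst 1)
    rw [heig y, h1, hqstarK.2.1, mul_one]

lemma isClosed_Dset (T : Linf →L[ℝ] Linf) (I : Linf → ℝ) :
    IsClosed {p : Ba | (∀ y : Linf, (∀ n, 0 ≤ y n) → 0 ≤ p y) ∧ p (cst 1) = 1 ∧
      (∀ y, I y ≤ p y) ∧ ∀ z, p (T z) = p (T (cst 1)) * p z} := by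
  have h1 : IsClosed {p : Ba | ∀ y : Linf, (∀ n, 0 ≤ y n) → 0 ≤ p y} := by
    have e : {p : Ba | ∀ y : Linf, (∀ n, 0 ≤ y n) → 0 ≤ p y} =
        ⋂ (y : Linf) (_ : ∀ n, 0 ≤ y n), {p : Ba | 0 ≤ p y} := by
      ext p; simp only [Set.mem_setOf_eq, Set.mem_iInter]
    rw [e]
    exact isClosed_iInter fun y => isClosed_iInter fun _ =>
      isClosed_le continuous_const (WeakDual.eval_continuous y)
  have h2 : IsClosed {p : Ba | p (cst 1) = 1} :=
    isClosed_eq (WeakDual.eval_continuous (cst 1)) continuous_const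
  have h3 : IsClosed {p : Ba | ∀ y, I y ≤ p y} := by
    have e : {p : Ba | ∀ y, I y ≤ p y} = ⋂ (y : Linf), {p : Ba | I y ≤ p y} := by
      ext p; simp only [Set.mem_setOf_eq, Set.mem_iInter]
    rw [e]
    exact isClosed_iInter fun y =>
      isClosed_le continuous_const (WeakDual.eval_continuous y)
  have h4 : IsClosed {p : Ba | ∀ z, p (T z) = p (T (cst 1)) * p z} := by
    have e : {p : Ba | ∀ z, p (T z) = p (T (cst 1)) * p z} =
        ⋂ (z : Linf), {p : Ba | p (T z) = p (T (cst 1)) * p z} := by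
      ext p; simp only [Set.mem_setOf_eq, Set.mem_iInter]
    rw [e]
    exact isClosed_iInter fun z =>
      isClosed_eq (WeakDual.eval_continuous (T z))
        ((WeakDual.eval_continuous (T (cst 1))).mul (WeakDual.eval_continuous z))
  have e : {p : Ba | (∀ y : Linf, (∀ n, 0 ≤ y n) → 0 ≤ p y) ∧ p (cst 1) = 1 ∧
      (∀ y, I y ≤ p y) ∧ ∀ z, p (T z) = p (T (cst 1)) * p z} =
      {p : Ba | ∀ y : Linf, (∀ n, 0 ≤ y n) → 0 ≤ p y} ∩
      ({p : Ba | p (cst 1) = 1} ∩ ({p : Ba | ∀ y, I y ≤ p y} ∩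
        {p : Ba | ∀ z, p (T z) = p (T (cst 1)) * p z})) := by
    ext p
    simp only [Set.mem_setOf_eq, Set.mem_inter_iff]
  rw [e]
  exact h1.inter (h2.inter (h3.inter h4))

lemma converse (T : Linf → Linf) (hpos : PosMap T)
    (hT1le : ∀ p ∈ DeltaT T, p (T (cst 1)) ≤ 1)
    (D : Set Ba) (hDne : D.Nonempty) (hDsub : D ⊆ DeltaT T)
    (I : Linf → ℝ) (hminf : MinForm D I) :
    A15 (fun x y => I y ≤ I x) ∧ ISU (fun x y => I y ≤ I x) ∧
      ITIS T (fun x y => I y ≤ I x) := by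
  have hDel : ∀ p ∈ D, (∀ y : Linf, (∀ n, 0 ≤ y n) → 0 ≤ p y) ∧ p (cst 1) = 1 :=
    fun p hp => (hDsub hp).1
  have hIle : ∀ (x : Linf), ∀ p ∈ D, I x ≤ p x := fun x => (hminf x).2
  have hIex : ∀ x : Linf, ∃ p ∈ D, I x = p x := fun x => (hminf x).1
  have hIcst : ∀ θ : ℝ, I (cst θ) = θ := by
    intro θ
    obtain ⟨p, hp, he⟩ := hIex (cst θ)
    rw [he, map_cst, (hDel p hp).2, mul_one]
  have hImono : ∀ x y : Linf, (∀ n, y n ≤ x n) → I y ≤ I x := by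
    intro x y h
    obtain ⟨p, hp, he⟩ := hIex x
    have h1 : 0 ≤ p (x - y) := (hDel p hp).1 (x - y) (fun n => by
      simp only [BoundedContinuousFunction.coe_sub, Pi.sub_apply, sub_nonneg]
      exact h n)
    rw [map_sub] at h1
    have h2 := hIle y p hp
    rw [he]
    linarith
  have htransl : ∀ (x : Linf) (θ : ℝ), I (x + cst θ) = I x + θ := by
    intro x θ
    have h1 : I (x + cst θ) ≤ I x + θ := by
      obtain ⟨p, hp, he⟩ := hIex x
      have h2 := hIle (x + cst θ) p hp
      rw [map_add, map_cst, (hDel p hp).2, mul_one] at h2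
      linarith
    have h2 : I x + θ ≤ I (x + cst θ) := by
      obtain ⟨p, hp, he⟩ := hIex (x + cst θ)
      rw [map_add, map_cst, (hDel p hp).2, mul_one] at he
      have h3 := hIle x p hp
      linarith
    linarith
  have hhomog : ∀ (a : ℝ) (x : Linf), 0 ≤ a → I (a • x) = a * I x := by
    intro a x ha
    have h1 : I (a • x) ≤ a * I x := by
      obtain ⟨p, hp, he⟩ := hIex x
      have h2 := hIle (a • x) p hp
      rw [map_smul, smul_eq_mul] at h2
      rw [he]
      calc I (a • x) ≤ a * p x := h2
      _ = a * p x := rfl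
    have h2 : a * I x ≤ I (a • x) := by
      obtain ⟨p, hp, he⟩ := hIex (a • x)
      rw [map_smul, smul_eq_mul] at he
      have h3 := hIle x p hp
      rw [he]
      exact mul_le_mul_of_nonneg_left h3 ha
    linarith
  have hlip : ∀ x y : Linf, I x ≤ I y + ‖x - y‖ := by
    intro x y
    obtain ⟨p, hp, he⟩ := hIex y
    have h1 := hIle x p hp
    have h2 : p x = p y + p (x - y) := by rw [map_sub]; ring
    have h3 : p (x - y) ≤ ‖x - y‖ :=
      pos_map_le_norm p (hDel p hp).1 (hDel p hp).2 (x - y)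
    rw [h2] at h1
    linarith
  have hIcont : Continuous I := by
    have hl : LipschitzWith 1 I := by
      refine LipschitzWith.of_dist_le_mul fun a b => ?_
      rw [NNReal.coe_one, one_mul, Real.dist_eq, dist_eq_norm]
      refine abs_le.2 ⟨?_, ?_⟩
      · have h := hlip b a
        rw [norm_sub_rev] at h
        linarith
      · have := hlip a b
        linarith
    exact hl.continuous
  refine ⟨⟨⟨fun x y => le_total (I y) (I x), fun x y z h1 h2 => le_trans h2 h1⟩,
    ⟨fun x y h => hImono x y h, ?_, ?_⟩, ?_, ?_, ?_⟩, ?_, ?_⟩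
  · show I (cst 0) ≤ I (cst 1)
    rw [hIcst, hIcst]; norm_num
  · show ¬ (I (cst 1) ≤ I (cst 0))
    rw [hIcst, hIcst]; norm_num
  · -- A3
    intro x y z
    have hφ : Continuous fun α : ℝ => I (α • x + (1 - α) • z) :=
      hIcont.comp ((continuous_id.smul continuous_const).add
        ((continuous_const.sub continuous_id).smul continuous_const))
    constructor
    · exact isClosed_Icc.inter (isClosed_le continuous_const hφ)
    · exact isClosed_Icc.inter (isClosed_le hφ continuous_const)
  · -- A4
    intro x y θ h
    show I (y + cst θ) ≤ I (x + cst θ)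
    rw [htransl, htransl]
    have : I y ≤ I x := h
    linarith
  · -- A5
    intro x y θ lam hlam h1 h2
    have h1' : θ ≤ I x := by
      have : I (cst θ) ≤ I x := h1
      rwa [hIcst] at this
    have h2' : θ ≤ I y := by
      have : I (cst θ) ≤ I y := h2
      rwa [hIcst] at this
    show I (cst θ) ≤ I (lam • x + (1 - lam) • y)
    rw [hIcst]
    obtain ⟨p, hp, he⟩ := hIex (lam • x + (1 - lam) • y)
    have hx : θ ≤ p x := le_trans h1' (hIle x p hp)
    have hy : θ ≤ p y := le_trans h2' (hIle y p hp)
    rw [he, map_add, map_smul, map_smul, smul_eq_mul, smul_eq_mul]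
    nlinarith [mul_nonneg hlam.1 (sub_nonneg.2 hx),
      mul_nonneg (sub_nonneg.2 hlam.2) (sub_nonneg.2 hy)]
  · -- ISU
    intro x y α hα h
    show I (α • y) ≤ I (α • x)
    rw [hhomog α y hα, hhomog α x hα]
    exact mul_le_mul_of_nonneg_left h hα
  · -- ITIS
    intro x d h
    have h' : I x ≤ I (x + d) := h
    show I x ≤ I (x + T d)
    obtain ⟨p, hp, he⟩ := hIex (x + T d)
    obtain ⟨⟨hppos, hp1⟩, lam0, hlam0⟩ := hDsub hp
    have hlameq : p (T (cst 1)) = lam0 := by rw [hlam0 (cst 1), hp1, mul_one]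
    have hlam_nonneg : 0 ≤ lam0 := by
      rw [← hlameq]
      exact hppos _ (hpos (cst 1) (fun n => by rw [cst_apply]; norm_num))
    have hlam_le : lam0 ≤ 1 := by rw [← hlameq]; exact hT1le p (hDsub hp)
    have hpx := hIle x p hp
    have hpxd := hIle (x + d) p hp
    rw [map_add] at hpxd
    have hptd : p (T d) = lam0 * p d := hlam0 d
    rw [he, map_add, hptd]
    rcases le_or_gt 0 (p d) with hc | hc
    · nlinarith [mul_nonneg hlam_nonneg hc]
    · nlinarith [mul_nonneg (sub_nonneg.2 hlam_le) (neg_nonneg.2 hc.le)]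

end PartC

end S7

/-- Proposition: maxmin over `Δ(T*)`. -/
theorem stmt7 (T : Linf → Linf) (hlin : IsLinearMap ℝ T) (hcont : Continuous T)
    (hpos : PosMap T) :
    (∀ R : Linf → Linf → Prop, A15 R → ISU R → ITIS T R →
      ∃ D : Set Ba, D.Nonempty ∧ IsClosed D ∧ D ⊆ DeltaT T ∧
        ∃ I : Linf → ℝ, ConstEquiv R I ∧ Represents R I ∧
          (∀ J : Linf → ℝ, ConstEquiv R J → J = I) ∧ MinForm D I) ∧
    ((∀ p ∈ DeltaT T, p (T (cst 1)) ≤ 1) →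
      ∀ D : Set Ba, D.Nonempty → IsClosed D → D ⊆ DeltaT T →
        ∀ I : Linf → ℝ, MinForm D I →
          A15 (fun x y => I y ≤ I x) ∧ ISU (fun x y => I y ≤ I x) ∧
            ITIS T (fun x y => I y ≤ I x)) := by
  set Tc : Linf →L[ℝ] Linf := ⟨hlin.mk' T, hcont⟩ with hTcdef
  have hTca : ∀ z : Linf, Tc z = T z := fun z => rfl
  have hposc : ∀ y : Linf, (∀ n, 0 ≤ y n) → ∀ n, 0 ≤ Tc y n := by
    intro y hy n
    rw [hTca]
    exact hpos y hy n
  constructor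
  · -- forward direction
    intro R h15 hisu hitis
    obtain ⟨I, hce, hrep, hIcst, hImono, htransl, hhomog, hsuper⟩ := S7.partA h15 hisu
    have hITI : ∀ x d : Linf, I x ≤ I (x + d) → I x ≤ I (x + Tc d) := by
      intro x d h
      have h1 : R (x + d) x := (hrep _ _).2 h
      have h2 := hitis x d h1
      rw [hTca]
      exact (hrep _ _).1 h2
    set D : Set Ba := {p | (∀ y : Linf, (∀ n, 0 ≤ y n) → 0 ≤ p y) ∧ p (cst 1) = 1 ∧
      (∀ y, I y ≤ p y) ∧ ∀ z, p (Tc z) = p (Tc (cst 1)) * p z} with hDdef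
    have hmin : ∀ x : Linf, ∃ p ∈ D, I x = p x := by
      intro x
      obtain ⟨q, hqK, heig⟩ :=
        S7.eigen_exists Tc I hposc hIcst hImono htransl hhomog hsuper hITI x
      exact ⟨q, ⟨hqK.1, hqK.2.1, hqK.2.2.1, heig⟩, hqK.2.2.2.symm⟩
    refine ⟨D, ?_, ?_, ?_, I, hce, hrep, ?_, ?_⟩
    · obtain ⟨p, hp, _⟩ := hmin 0
      exact ⟨p, hp⟩
    · exact S7.isClosed_Dset Tc I
    · intro p hp
      refine ⟨⟨hp.1, hp.2.1⟩, p (Tc (cst 1)), fun z => ?_⟩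
      rw [← hTca z]
      exact hp.2.2.2 z
    · intro J hJ
      funext x
      have h1 := (hrep x (cst (J x))).1 (hJ x).1
      have h2 := (hrep (cst (J x)) x).1 (hJ x).2
      rw [hIcst] at h1 h2
      exact le_antisymm h1 h2
    · intro x
      exact ⟨hmin x, fun p hp => hp.2.2.1 x⟩
  · -- converse direction
    intro hT1le D hDne hDcl hDsub I hminf
    exact S7.converse T hpos hT1le D hDne hDsub I hminf

end
end
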